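/- arXiv:1907.05055 — 4 statements merged into one kernel-verified Lean document; each statement's English description precedes it below -/
import Mathlib

section
/- Let G be a connected graph with maximum degree at most d, M ∈ M(G), and x ∈ ker(M) a broken vector (i.e. G[supp_+(x)] disconnected). Then G[supp(x)] has at most d connected components, and if it has exactly d components, then G[V \ supp(x)] has no edges and V \ supp(x) = N(supp(x)). -/
open Matrix Set

variable {V : Type*} [Fintype V] [DecidableEq V]

/-- Positive support of a vector. -/
def posSupp (x : V → ℝ) : Set V := {v | 0 < x v}

/-- Negative support of a vector. -/
def negSupp (x : V → ℝ) : Set V := {v | x v < 0}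

/-- Support of a vector. -/
def supp (x : V → ℝ) : Set V := {v | x v ≠ 0}

/-- External neighborhood of a set of vertices. -/
def nbhd (G : SimpleGraph V) (S : Set V) : Set V := {v | v ∉ S ∧ ∃ u ∈ S, G.Adj u v}

/-- Number of connected components of the subgraph induced by `S`. -/
noncomputable def compCount (G : SimpleGraph V) (S : Set V) : ℕ :=
  Nat.card (G.induce S).ConnectedComponent

/-- `C` is (the vertex set of) a connected component of the subgraph induced by `S`. -/
def IsComponentOf (G : SimpleGraph V) (S C : Set V) : Prop :=
  ∃ K : (G.induce S).ConnectedComponent, C = Subtype.val '' K.supp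

/-- `M ∈ M(G)`: a real symmetric matrix with exactly one negative eigenvalue
(counted with multiplicity), negative entries on edges and zero off-diagonal
entries on non-edges. -/
structure CdVMatrix (G : SimpleGraph V) (M : Matrix V V ℝ) : Prop where
  herm : M.IsHermitian
  edge_neg : ∀ u v, G.Adj u v → M u v < 0
  nonedge_zero : ∀ u v, u ≠ v → ¬ G.Adj u v → M u v = 0
  one_neg : {i | herm.eigenvalues i < 0}.ncard = 1

/-- Semivalid representation of a graph: conditions (i)-(iv). -/
def Semivalid (G : SimpleGraph V) (L : Submodule ℝ (V → ℝ)) : Prop :=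
  ∀ x ∈ L, x ≠ 0 →
    ((posSupp x).Nonempty ∧ (negSupp x).Nonempty) ∧
    ((G.induce (posSupp x)).Connected ∨
      (compCount G (posSupp x) = 2 ∧ (G.induce (negSupp x)).Connected)) ∧
    ((∀ y ∈ L, y ≠ 0 → supp y ⊆ supp x → supp y = supp x) →
      (G.induce (posSupp x)).Connected ∧ (G.induce (negSupp x)).Connected) ∧
    (¬ (G.induce (posSupp x)).Connected →
      (∀ u ∈ posSupp x, ∀ v ∈ negSupp x, ¬ G.Adj u v) ∧
      (∀ C : Set V, IsComponentOf G (supp x) C → nbhd G C = nbhd G (supp x)))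

/-- The sign-pattern cone of `x` in `L` (a relatively open cone of the fan `P(L)`). -/
def signCone (L : Submodule ℝ (V → ℝ)) (x : V → ℝ) : Set (V → ℝ) :=
  {y | y ∈ L ∧ posSupp y = posSupp x ∧ negSupp y = negSupp x}

/-- The dimension of the cone of `x`, i.e. the dimension of its linear span. -/
noncomputable def coneDim (L : Submodule ℝ (V → ℝ)) (x : V → ℝ) : ℕ :=
  Module.finrank ℝ (Submodule.span ℝ (signCone L x))

/-- The graph parameter η: maximal dimension of a semivalid representation. -/
noncomputable def etaParam (G : SimpleGraph V) : ℕ :=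
  sSup {n | ∃ L : Submodule ℝ (V → ℝ), Semivalid G L ∧ Module.finrank ℝ L = n}

/-- Valid representation of a graph. -/
def Valid (G : SimpleGraph V) (X : Submodule ℝ (V → ℝ)) : Prop :=
  ∀ x ∈ X, x ≠ 0 → (G.induce (posSupp x)).Connected

/-- The graph parameter λ: maximal dimension of a valid representation. -/
noncomputable def lambdaParam (G : SimpleGraph V) : ℕ :=
  sSup {n | ∃ X : Submodule ℝ (V → ℝ), Valid G X ∧ Module.finrank ℝ X = n}

/-- The Strong Arnold hypothesis. -/
def SAH (G : SimpleGraph V) (M : Matrix V V ℝ) : Prop :=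
  ∀ X : Matrix V V ℝ, X.IsSymm → (∀ u v, (u = v ∨ G.Adj u v) → X u v = 0) →
    M * X = 0 → X = 0

/-- The Colin de Verdière parameter μ. -/
noncomputable def muParam (G : SimpleGraph V) : ℕ :=
  sSup {n | ∃ M : Matrix V V ℝ, CdVMatrix G M ∧ SAH G M ∧
    Module.finrank ℝ (LinearMap.ker M.mulVecLin) = n}


section Helpers
set_option maxHeartbeats 1600000
open Finset

set_option linter.unusedSectionVars false

lemma expand0 {M : Matrix V V ℝ} (h : M.IsHermitian) (y : V → ℝ) (u : V) :
    y u = ∑ i, ((⇑(h.eigenvectorBasis i) : V → ℝ) ⬝ᵥ y) * (h.eigenvectorBasis i) u := by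
  have h1 := h.eigenvectorBasis.sum_repr' ((WithLp.equiv 2 (V → ℝ)).symm y)
  have h2 : ∀ i, (inner ℝ (h.eigenvectorBasis i) ((WithLp.equiv 2 (V → ℝ)).symm y) : ℝ)
      = (⇑(h.eigenvectorBasis i) : V → ℝ) ⬝ᵥ y := by
    intro i
    simp only [PiLp.inner_apply, RCLike.inner_apply, starRingEnd_apply, star_trivial]
    exact Finset.sum_congr rfl fun _ _ => mul_comm _ _
  have h3 := congrFun (congrArg (fun z : EuclideanSpace ℝ V => (z : V → ℝ)) h1) u
  exact (h3.symm.trans (by simp only [WithLp.ofLp_sum, WithLp.ofLp_smul]; exact Finset.sum_apply u Finset.univ _)).trans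
    (Finset.sum_congr rfl fun i _ => by rw [h2]; rfl)

lemma mulVec_expand0 {M : Matrix V V ℝ} (h : M.IsHermitian) (y : V → ℝ) (u : V) :
    (M *ᵥ y) u = ∑ i, ((⇑(h.eigenvectorBasis i) : V → ℝ) ⬝ᵥ y) *
      (h.eigenvalues i * (h.eigenvectorBasis i) u) := by
  calc (M *ᵥ y) u = ∑ t, M u t * y t := rfl
    _ = ∑ t, ∑ i, ((⇑(h.eigenvectorBasis i) : V → ℝ) ⬝ᵥ y) * (M u t * (h.eigenvectorBasis i) t) := by
        refine Finset.sum_congr rfl fun t _ => ?_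
        rw [show y t = ∑ i, ((⇑(h.eigenvectorBasis i) : V → ℝ) ⬝ᵥ y) * (h.eigenvectorBasis i) t
          from expand0 h y t, Finset.mul_sum]
        exact Finset.sum_congr rfl fun i _ => by ring
    _ = ∑ i, ∑ t, ((⇑(h.eigenvectorBasis i) : V → ℝ) ⬝ᵥ y) * (M u t * (h.eigenvectorBasis i) t) :=
        Finset.sum_comm
    _ = ∑ i, ((⇑(h.eigenvectorBasis i) : V → ℝ) ⬝ᵥ y) * (h.eigenvalues i * (h.eigenvectorBasis i) u) := by
        refine Finset.sum_congr rfl fun i _ => ?_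
        rw [← Finset.mul_sum]
        congr 1
        have h4 := congrFun (h.mulVec_eigenvectorBasis i) u
        calc ∑ t, M u t * (h.eigenvectorBasis i) t = (M *ᵥ ⇑(h.eigenvectorBasis i)) u := rfl
          _ = h.eigenvalues i * (h.eigenvectorBasis i) u := h4

lemma quad_expand0 {M : Matrix V V ℝ} (h : M.IsHermitian) (y : V → ℝ) :
    y ⬝ᵥ (M *ᵥ y) = ∑ i, h.eigenvalues i * ((⇑(h.eigenvectorBasis i) : V → ℝ) ⬝ᵥ y)^2 := by
  calc y ⬝ᵥ (M *ᵥ y) = ∑ u, y u * (M *ᵥ y) u := rfl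
    _ = ∑ u, ∑ i, h.eigenvalues i * ((⇑(h.eigenvectorBasis i) : V → ℝ) ⬝ᵥ y) *
          ((h.eigenvectorBasis i) u * y u) := by
        refine Finset.sum_congr rfl fun u _ => ?_
        rw [mulVec_expand0 h y u, Finset.mul_sum]
        exact Finset.sum_congr rfl fun i _ => by ring
    _ = ∑ i, ∑ u, h.eigenvalues i * ((⇑(h.eigenvectorBasis i) : V → ℝ) ⬝ᵥ y) *
          ((h.eigenvectorBasis i) u * y u) := Finset.sum_comm
    _ = _ := by
        refine Finset.sum_congr rfl fun i _ => ?_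
        rw [← Finset.mul_sum]
        have : ∑ u, (h.eigenvectorBasis i) u * y u = (⇑(h.eigenvectorBasis i) : V → ℝ) ⬝ᵥ y := rfl
        rw [this]; ring

lemma norm_expand0 {M : Matrix V V ℝ} (h : M.IsHermitian) (y : V → ℝ) :
    y ⬝ᵥ y = ∑ i, ((⇑(h.eigenvectorBasis i) : V → ℝ) ⬝ᵥ y)^2 := by
  calc y ⬝ᵥ y = ∑ u, y u * y u := rfl
    _ = ∑ u, ∑ i, ((⇑(h.eigenvectorBasis i) : V → ℝ) ⬝ᵥ y) * ((h.eigenvectorBasis i) u * y u) := by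
        refine Finset.sum_congr rfl fun u _ => ?_
        rw [show y u = ∑ i, ((⇑(h.eigenvectorBasis i) : V → ℝ) ⬝ᵥ y) * (h.eigenvectorBasis i) u
          from expand0 h y u, Finset.sum_mul]
        exact Finset.sum_congr rfl fun i _ => by ring
    _ = ∑ i, ∑ u, ((⇑(h.eigenvectorBasis i) : V → ℝ) ⬝ᵥ y) * ((h.eigenvectorBasis i) u * y u) :=
        Finset.sum_comm
    _ = _ := by
        refine Finset.sum_congr rfl fun i _ => ?_
        rw [← Finset.mul_sum]
        have : ∑ u, (h.eigenvectorBasis i) u * y u = (⇑(h.eigenvectorBasis i) : V → ℝ) ⬝ᵥ y := rfl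
        rw [this]; ring

/-- Propagation along walks. -/
lemma walk_prop {W : Type*} {G : SimpleGraph W} (Q : W → Prop)
    (hQ : ∀ a b, G.Adj a b → Q a → Q b) {a b : W} (h : G.Reachable a b) (ha : Q a) : Q b := by
  obtain ⟨Wk⟩ := h
  induction Wk with
  | nil => exact ha
  | cons hadj _ ih => exact ih (hQ _ _ hadj ha)

lemma exists_cross {W : Type*} {G : SimpleGraph W} (Q : W → Prop) {a b : W}
    (h : G.Reachable a b) (ha : ¬ Q a) (hb : Q b) :
    ∃ u v, G.Adj u v ∧ ¬ Q u ∧ Q v := by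
  by_contra hc
  push_neg at hc
  exact (walk_prop (fun v => ¬ Q v) (fun u v huv hqu => hc u v huv hqu) h ha) hb

lemma herm_symm_entry {M : Matrix V V ℝ} (h : M.IsHermitian) (u v : V) : M u v = M v u := by
  have := congrFun (congrFun h v) u
  simpa using this

/-- Positive eigenvector propagation. -/
lemma eigen_pos {G : SimpleGraph V} (hG : G.Connected) {M : Matrix V V ℝ}
    (hoff : ∀ u v, u ≠ v → M u v ≤ 0) (hedge : ∀ u v, G.Adj u v → M u v < 0)
    {a : V → ℝ} {μ : ℝ} (ha : ∀ u, 0 ≤ a u) (ha0 : a ≠ 0) (heig : M *ᵥ a = μ • a) :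
    ∀ u, 0 < a u := by
  have hzero : ∀ p, a p = 0 → ∀ q, G.Adj p q → a q = 0 := by
    intro p hp q hq
    have h1 : (M *ᵥ a) p = 0 := by
      rw [heig]; simp [hp]
    have h2 : ∑ t, M p t * a t = 0 := h1
    have h3 : ∀ t ∈ Finset.univ, M p t * a t ≤ 0 := by
      intro t _
      by_cases ht : t = p
      · subst ht; simp [hp]
      · exact mul_nonpos_of_nonpos_of_nonneg (hoff p t (Ne.symm ht)) (ha t)
    have h4 := (Finset.sum_eq_zero_iff_of_nonpos h3).1 h2 q (Finset.mem_univ q)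
    rcases mul_eq_zero.1 h4 with h5 | h5
    · exact absurd h5 (ne_of_lt (hedge p q hq))
    · exact h5
  obtain ⟨u₀, hu₀⟩ := Function.ne_iff.1 ha0
  intro t
  have hne : a t ≠ 0 := by
    refine walk_prop (fun v => a v ≠ 0) ?_ (hG.preconnected u₀ t) (by simpa using hu₀)
    intro p q hadj hp hq0
    exact hp (hzero q hq0 p hadj.symm)
  exact lt_of_le_of_ne (ha t) (Ne.symm hne)

lemma exists_perron {G : SimpleGraph V} (hG : G.Connected) {M : Matrix V V ℝ}
    (h : M.IsHermitian) (hedge : ∀ u v, G.Adj u v → M u v < 0)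
    (hnon : ∀ u v, u ≠ v → ¬ G.Adj u v → M u v = 0)
    (hone : {i | h.eigenvalues i < 0}.ncard = 1) :
    ∃ (w : V → ℝ) (μ₀ : ℝ), (∀ u, 0 < w u) ∧ μ₀ < 0 ∧ M *ᵥ w = μ₀ • w ∧
      ∀ y : V → ℝ, w ⬝ᵥ y = 0 → 0 ≤ y ⬝ᵥ (M *ᵥ y) ∧ (y ⬝ᵥ (M *ᵥ y) = 0 → M *ᵥ y = 0) := by
  classical
  have hoff : ∀ u v, u ≠ v → M u v ≤ 0 := by
    intro u v huv
    by_cases hadj : G.Adj u v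
    · exact (hedge u v hadj).le
    · exact le_of_eq (hnon u v huv hadj)
  obtain ⟨i₀, hset⟩ := Set.ncard_eq_one.1 hone
  have hneg : h.eigenvalues i₀ < 0 := by
    have : i₀ ∈ {i | h.eigenvalues i < 0} := by rw [hset]; rfl
    exact this
  have hpos : ∀ j, j ≠ i₀ → 0 ≤ h.eigenvalues j := by
    intro j hj
    by_contra hc
    have : j ∈ {i | h.eigenvalues i < 0} := lt_of_not_ge hc
    rw [hset] at this
    exact hj this
  set v : V → ℝ := ⇑(h.eigenvectorBasis i₀) with hv_def
  set a : V → ℝ := fun u => |v u| with ha_def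
  have hvex : ∃ u, v u ≠ 0 := by
    by_contra hc
    push_neg at hc
    exact h.eigenvectorBasis.orthonormal.ne_zero i₀ (by ext u; exact hc u)
  obtain ⟨u₀, hu₀⟩ := hvex
  have expand : ∀ z : V → ℝ, z ⬝ᵥ (M *ᵥ z) = ∑ u, ∑ t, z u * (M u t * z t) := by
    intro z
    refine Finset.sum_congr rfl fun u _ => ?_
    exact Finset.mul_sum _ _ _
  have habs : a ⬝ᵥ (M *ᵥ a) ≤ v ⬝ᵥ (M *ᵥ v) := by
    rw [expand a, expand v]
    refine Finset.sum_le_sum fun u _ => Finset.sum_le_sum fun t _ => ?_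
    by_cases hut : u = t
    · subst hut
      apply le_of_eq
      have h1 : a u * a u = v u * v u := abs_mul_abs_self (v u)
      calc a u * (M u u * a u) = M u u * (a u * a u) := by ring
        _ = M u u * (v u * v u) := by rw [h1]
        _ = v u * (M u u * v u) := by ring
    · have hm : M u t ≤ 0 := hoff u t hut
      have h2 : v u * v t ≤ a u * a t := by
        rw [ha_def]; simp only [← abs_mul]; exact le_abs_self _
      calc a u * (M u t * a t) = M u t * (a u * a t) := by ring
        _ ≤ M u t * (v u * v t) := mul_le_mul_of_nonpos_left h2 hm
        _ = v u * (M u t * v t) := by ring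
  set c : V → ℝ := fun i => (⇑(h.eigenvectorBasis i) : V → ℝ) ⬝ᵥ a with hc_def
  have hvMv : v ⬝ᵥ (M *ᵥ v) = h.eigenvalues i₀ * (v ⬝ᵥ v) := by
    rw [hv_def, h.mulVec_eigenvectorBasis i₀, dotProduct_smul, smul_eq_mul]
  have hvv : v ⬝ᵥ v = a ⬝ᵥ a :=
    Finset.sum_congr rfl fun u _ => (abs_mul_abs_self (v u)).symm
  have hsum : ∑ i, (h.eigenvalues i - h.eigenvalues i₀) * (c i)^2 ≤ 0 := by
    have e1 : ∑ i, (h.eigenvalues i - h.eigenvalues i₀) * (c i)^2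
        = a ⬝ᵥ (M *ᵥ a) - h.eigenvalues i₀ * (a ⬝ᵥ a) := by
      rw [quad_expand0 h a, norm_expand0 h a, Finset.mul_sum, ← Finset.sum_sub_distrib]
      exact Finset.sum_congr rfl fun i _ => by ring
    rw [e1]
    have := habs
    rw [hvMv, hvv] at this
    linarith
  have hterm : ∀ i ∈ Finset.univ, 0 ≤ (h.eigenvalues i - h.eigenvalues i₀) * (c i)^2 := by
    intro i _
    by_cases hi : i = i₀
    · subst hi; simp
    · exact mul_nonneg (by linarith [hpos i hi]) (sq_nonneg _)
  have hallz : ∀ i ∈ Finset.univ, (h.eigenvalues i - h.eigenvalues i₀) * (c i)^2 = 0 :=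
    (Finset.sum_eq_zero_iff_of_nonneg hterm).1 (le_antisymm hsum (Finset.sum_nonneg hterm))
  have hczero : ∀ i, i ≠ i₀ → c i = 0 := by
    intro i hi
    have h1 := hallz i (Finset.mem_univ i)
    have h2 : h.eigenvalues i - h.eigenvalues i₀ ≠ 0 := by
      have := hpos i hi; intro hc'; linarith
    have h3 := (mul_eq_zero.1 h1).resolve_left h2
    exact pow_eq_zero_iff two_ne_zero |>.1 h3
  have ha_expand : ∀ u, a u = c i₀ * v u := by
    intro u
    rw [show a u = ∑ i, c i * (h.eigenvectorBasis i) u from expand0 h a u]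
    rw [Finset.sum_eq_single i₀ (fun i _ hi => mul_eq_zero_of_left (hczero i hi) _)
      (fun hh => absurd (Finset.mem_univ i₀) hh)]
  have ha_eig : M *ᵥ a = h.eigenvalues i₀ • a := by
    funext u
    rw [mulVec_expand0 h a u]
    rw [Finset.sum_eq_single i₀ (fun i _ hi => mul_eq_zero_of_left (hczero i hi) _)
      (fun hh => absurd (Finset.mem_univ i₀) hh)]
    have h5 : (h.eigenvalues i₀ • a) u = h.eigenvalues i₀ * a u := rfl
    have h6 : ∀ t, (h.eigenvectorBasis i₀) t = v t := fun _ => rfl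
    rw [h5, ha_expand u, h6 u]
    ring
  have ha0 : a ≠ 0 := by
    intro hc'
    have : a u₀ = 0 := by rw [hc']; rfl
    exact hu₀ (abs_eq_zero.1 this)
  have hapos : ∀ u, 0 < a u :=
    eigen_pos hG hoff hedge (fun u => abs_nonneg _) ha0 ha_eig
  have hci₀ : c i₀ ≠ 0 := by
    intro hc'
    have := ha_expand u₀
    rw [hc', zero_mul] at this
    exact hu₀ (abs_eq_zero.1 this)
  refine ⟨a, h.eigenvalues i₀, hapos, hneg, ha_eig, ?_⟩
  intro y hwy
  have hvy : v ⬝ᵥ y = 0 := by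
    have e1 : a ⬝ᵥ y = c i₀ * (v ⬝ᵥ y) := by
      have e2 : c i₀ * (v ⬝ᵥ y) = ∑ u, c i₀ * (v u * y u) := Finset.mul_sum _ _ _
      rw [e2]
      exact Finset.sum_congr rfl fun u _ => by rw [ha_expand u]; ring
    rw [e1] at hwy
    exact (mul_eq_zero.1 hwy).resolve_left hci₀
  have hterm2 : ∀ i ∈ Finset.univ,
      0 ≤ h.eigenvalues i * ((⇑(h.eigenvectorBasis i) : V → ℝ) ⬝ᵥ y)^2 := by
    intro i _
    by_cases hi : i = i₀
    · rw [hi]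
      have e3 : (⇑(h.eigenvectorBasis i₀) : V → ℝ) ⬝ᵥ y = 0 := hvy
      rw [e3]
      simp
    · exact mul_nonneg (hpos i hi) (sq_nonneg _)
  have hq : 0 ≤ y ⬝ᵥ (M *ᵥ y) := by
    rw [quad_expand0 h y]
    exact Finset.sum_nonneg hterm2
  refine ⟨hq, ?_⟩
  intro hq0
  rw [quad_expand0 h y] at hq0
  have hall := (Finset.sum_eq_zero_iff_of_nonneg hterm2).1 hq0
  funext u
  rw [mulVec_expand0 h y u]
  refine Finset.sum_eq_zero fun i _ => ?_
  rcases mul_eq_zero.1 (hall i (Finset.mem_univ i)) with h1 | h1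
  · rw [h1]; ring
  · rw [pow_eq_zero_iff two_ne_zero |>.1 h1]; ring

lemma part_noedge {G : SimpleGraph V} {M : Matrix V V ℝ}
    (hoff : ∀ u v, u ≠ v → M u v ≤ 0) (hedge : ∀ u v, G.Adj u v → M u v < 0)
    (hnon : ∀ u v, u ≠ v → ¬ G.Adj u v → M u v = 0)
    {x : V → ℝ} (hker : M *ᵥ x = 0)
    {w : V → ℝ} (hw : ∀ u, 0 < w u)
    (hPSD : ∀ y : V → ℝ, w ⬝ᵥ y = 0 → 0 ≤ y ⬝ᵥ (M *ᵥ y) ∧ (y ⬝ᵥ (M *ᵥ y) = 0 → M *ᵥ y = 0))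
    (A B : Set V) (hAP : A ⊆ posSupp x) (hBP : B ⊆ posSupp x)
    (hdisj : ∀ t, t ∈ A → t ∉ B)
    (hcover : ∀ t, t ∈ posSupp x → t ∈ A ∨ t ∈ B)
    (hAB : ∀ a ∈ A, ∀ b ∈ B, ¬ G.Adj a b)
    (hAne : A.Nonempty) (hBne : B.Nonempty) :
    ∀ u ∈ A, ∀ t ∈ negSupp x, ¬ G.Adj u t := by
  classical
  set yN : V → ℝ := fun u => if u ∈ negSupp x then x u else 0 with hyN
  have hNterm : ∀ u, u ∈ posSupp x → ∀ t, 0 ≤ M u t * yN t := by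
    intro u hu t
    by_cases htN : t ∈ negSupp x
    · have hne : u ≠ t := fun he => absurd hu.out (by rw [he]; exact asymm htN.out)
      have h1 : M u t ≤ 0 := hoff u t hne
      have h2 : yN t ≤ 0 := by simp only [hyN, if_pos htN]; exact le_of_lt htN.out
      nlinarith
    · simp [hyN, htN]
  -- generalized computation for a part C (with complement-part D)
  have main : ∀ C D : Set V, C ⊆ posSupp x → D ⊆ posSupp x → (∀ t, t ∈ C → t ∉ D) →
      (∀ t, t ∈ posSupp x → t ∈ C ∨ t ∈ D) → (∀ a ∈ C, ∀ b ∈ D, ¬ G.Adj a b) →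
      ∀ u ∈ C, (M *ᵥ (fun s => if s ∈ C then x s else 0)) u = - ∑ t, M u t * yN t := by
    intro C D hCP hDP hd hc hCD u hu
    set yC : V → ℝ := fun s => if s ∈ C then x s else 0 with hyC
    have h0 : ∑ t, M u t * x t = 0 := congrFun hker u
    have hterm : ∀ t, M u t * x t = M u t * yC t + M u t * yN t := by
      intro t
      by_cases htC : t ∈ C
      · have : t ∉ negSupp x := fun hn => absurd (hCP htC).out (asymm hn.out)
        simp [hyC, hyN, htC, this]
      · by_cases htN : t ∈ negSupp x
        · simp [hyC, hyN, htC, htN]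
        · rcases lt_trichotomy (x t) 0 with h | h | h
          · exact absurd h htN
          · simp [hyC, hyN, htC, htN, h]
          · have htD : t ∈ D := (hc t h).resolve_left htC
            have hM0 : M u t = 0 := by
              have hne : u ≠ t := fun he => hd u hu (he ▸ htD)
              by_cases hadj : G.Adj u t
              · exact absurd hadj (hCD u hu t htD)
              · exact hnon u t hne hadj
            simp [hyC, hyN, htC, htN, hM0]
    have h1 : ∑ t, M u t * x t = (∑ t, M u t * yC t) + ∑ t, M u t * yN t := by
      rw [← Finset.sum_add_distrib]
      exact Finset.sum_congr rfl fun t _ => hterm t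
    have h2 : (M *ᵥ yC) u = ∑ t, M u t * yC t := rfl
    rw [h2]; linarith
  set yA : V → ℝ := fun s => if s ∈ A then x s else 0 with hyA
  set yB : V → ℝ := fun s => if s ∈ B then x s else 0 with hyB
  have hdisj' : ∀ t, t ∈ B → t ∉ A := fun t htB htA => hdisj t htA htB
  have hcover' : ∀ t, t ∈ posSupp x → t ∈ B ∨ t ∈ A := fun t ht => (hcover t ht).symm
  have hBA : ∀ a ∈ B, ∀ b ∈ A, ¬ G.Adj a b := fun a ha b hb hadj =>
    hAB b hb a ha hadj.symm
  have hMyA := main A B hAP hBP hdisj hcover hAB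
  have hMyB := main B A hBP hAP hdisj' hcover' hBA
  have hMyA_np : ∀ u ∈ A, (M *ᵥ yA) u ≤ 0 := by
    intro u hu
    rw [hMyA u hu]
    simp only [neg_nonpos]
    exact Finset.sum_nonneg fun t _ => hNterm u (hAP hu) t
  have hMyB_np : ∀ u ∈ B, (M *ᵥ yB) u ≤ 0 := by
    intro u hu
    rw [hMyB u hu]
    simp only [neg_nonpos]
    exact Finset.sum_nonneg fun t _ => hNterm u (hBP hu) t
  have hqA_terms : ∀ u ∈ Finset.univ, yA u * (M *ᵥ yA) u ≤ 0 := by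
    intro u _
    by_cases hu : u ∈ A
    · have h1 : yA u = x u := by simp [hyA, hu]
      rw [h1]
      exact mul_nonpos_of_nonneg_of_nonpos (le_of_lt (hAP hu).out) (hMyA_np u hu)
    · simp [hyA, hu]
  have hqB_terms : ∀ u ∈ Finset.univ, yB u * (M *ᵥ yB) u ≤ 0 := by
    intro u _
    by_cases hu : u ∈ B
    · have h1 : yB u = x u := by simp [hyB, hu]
      rw [h1]
      exact mul_nonpos_of_nonneg_of_nonpos (le_of_lt (hBP hu).out) (hMyB_np u hu)
    · simp [hyB, hu]
  have hqA : yA ⬝ᵥ (M *ᵥ yA) ≤ 0 := Finset.sum_nonpos hqA_terms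
  have hqB : yB ⬝ᵥ (M *ᵥ yB) ≤ 0 := Finset.sum_nonpos hqB_terms
  have hcrossAB : yA ⬝ᵥ (M *ᵥ yB) = 0 := by
    refine Finset.sum_eq_zero fun u _ => ?_
    by_cases hu : u ∈ A
    · have : (M *ᵥ yB) u = 0 := by
        refine Finset.sum_eq_zero fun t _ => ?_
        by_cases ht : t ∈ B
        · have hne : u ≠ t := fun he => hdisj u hu (he ▸ ht)
          have hM0 : M u t = 0 := by
            by_cases hadj : G.Adj u t
            · exact absurd hadj (hAB u hu t ht)
            · exact hnon u t hne hadj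
          show M u t * _ = 0
          rw [hM0, zero_mul]
        · simp [hyB, ht]
      rw [this, mul_zero]
    · simp [hyA, hu]
  have hcrossBA : yB ⬝ᵥ (M *ᵥ yA) = 0 := by
    refine Finset.sum_eq_zero fun u _ => ?_
    by_cases hu : u ∈ B
    · have : (M *ᵥ yA) u = 0 := by
        refine Finset.sum_eq_zero fun t _ => ?_
        by_cases ht : t ∈ A
        · have hne : u ≠ t := fun he => hdisj t ht (he ▸ hu)
          have hM0 : M u t = 0 := by
            by_cases hadj : G.Adj u t
            · exact absurd hadj (hBA u hu t ht)
            · exact hnon u t hne hadj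
          show M u t * _ = 0
          rw [hM0, zero_mul]
        · simp [hyA, ht]
      rw [this, mul_zero]
    · simp [hyB, hu]
  have hwA : 0 < w ⬝ᵥ yA := by
    obtain ⟨a, ha⟩ := hAne
    refine Finset.sum_pos' (fun u _ => ?_) ⟨a, Finset.mem_univ a, ?_⟩
    · by_cases hu : u ∈ A
      · simp only [hyA, if_pos hu]
        exact mul_nonneg (le_of_lt (hw u)) (le_of_lt (hAP hu).out)
      · simp [hyA, hu]
    · simp only [hyA, if_pos ha]
      exact mul_pos (hw a) (hAP ha).out
  have hwB : 0 < w ⬝ᵥ yB := by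
    obtain ⟨b, hb⟩ := hBne
    refine Finset.sum_pos' (fun u _ => ?_) ⟨b, Finset.mem_univ b, ?_⟩
    · by_cases hu : u ∈ B
      · simp only [hyB, if_pos hu]
        exact mul_nonneg (le_of_lt (hw u)) (le_of_lt (hBP hu).out)
      · simp [hyB, hu]
    · simp only [hyB, if_pos hb]
      exact mul_pos (hw b) (hBP hb).out
  set α : ℝ := w ⬝ᵥ yB with hα
  set β : ℝ := w ⬝ᵥ yA with hβ
  set y : V → ℝ := α • yA - β • yB with hy
  have hwy : w ⬝ᵥ y = 0 := by
    rw [hy, dotProduct_sub, dotProduct_smul, dotProduct_smul]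
    simp only [smul_eq_mul, ← hα, ← hβ]
    ring
  have hMy : M *ᵥ y = α • (M *ᵥ yA) - β • (M *ᵥ yB) := by
    rw [hy, Matrix.mulVec_sub, Matrix.mulVec_smul, Matrix.mulVec_smul]
  have hquady : y ⬝ᵥ (M *ᵥ y) = α^2 * (yA ⬝ᵥ (M *ᵥ yA)) + β^2 * (yB ⬝ᵥ (M *ᵥ yB)) := by
    rw [hMy, hy]
    rw [sub_dotProduct, smul_dotProduct, smul_dotProduct, dotProduct_sub, dotProduct_sub,
      dotProduct_smul, dotProduct_smul, dotProduct_smul, dotProduct_smul,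
      hcrossAB, hcrossBA]
    simp only [smul_eq_mul]
    ring
  have hq0 : y ⬝ᵥ (M *ᵥ y) = 0 := by
    have h1 := (hPSD y hwy).1
    have h2 : y ⬝ᵥ (M *ᵥ y) ≤ 0 := by
      rw [hquady]
      have := mul_nonpos_of_nonneg_of_nonpos (sq_nonneg α) hqA
      have := mul_nonpos_of_nonneg_of_nonpos (sq_nonneg β) hqB
      linarith
    linarith
  have hqA0 : yA ⬝ᵥ (M *ᵥ yA) = 0 := by
    rw [hquady] at hq0
    have h1 := mul_nonpos_of_nonneg_of_nonpos (sq_nonneg α) hqA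
    have h2 := mul_nonpos_of_nonneg_of_nonpos (sq_nonneg β) hqB
    have h3 : α^2 * (yA ⬝ᵥ (M *ᵥ yA)) = 0 := by linarith
    have h4 : α^2 ≠ 0 := pow_ne_zero 2 (ne_of_gt hwB)
    exact (mul_eq_zero.1 h3).resolve_left h4
  -- each diagonal term of the quadratic form of yA vanishes
  have hterm0 : ∀ u ∈ Finset.univ, yA u * (M *ᵥ yA) u = 0 :=
    (Finset.sum_eq_zero_iff_of_nonpos hqA_terms).1 hqA0
  intro u hu t ht hadj
  have h5 : (M *ᵥ yA) u = 0 := by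
    have h6 := hterm0 u (Finset.mem_univ u)
    have h7 : yA u = x u := by simp [hyA, hu]
    rw [h7] at h6
    exact (mul_eq_zero.1 h6).resolve_left (ne_of_gt (hAP hu).out)
  rw [hMyA u hu] at h5
  have h8 : ∑ t', M u t' * yN t' = 0 := by linarith
  have h9 := (Finset.sum_eq_zero_iff_of_nonneg
    (fun t' _ => hNterm u (hAP hu) t')).1 h8 t (Finset.mem_univ t)
  have h10 : yN t = x t := by simp [hyN, ht]
  rw [h10] at h9
  rcases mul_eq_zero.1 h9 with h | h
  · exact absurd h (ne_of_lt (hedge u t hadj))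
  · exact absurd h (ne_of_lt ht.out)


end Helpers

/-- for `G` connected of maximum degree ≤ d and a broken kernel vector `x`
of `M ∈ M(G)`, `G[supp(x)]` has at most `d` components; if exactly `d`, then
`G[V ∖ supp(x)]` has no edges and `V ∖ supp(x) = N(supp(x))`. -/
theorem stmt8 (G : SimpleGraph V) (hG : G.Connected) (d : ℕ)
    (hd : ∀ v, (G.neighborSet v).ncard ≤ d)
    (M : Matrix V V ℝ) (hM : CdVMatrix G M)
    (x : V → ℝ) (hker : M.mulVec x = 0) (hx0 : x ≠ 0)
    (hbroken : ¬ (G.induce (posSupp x)).Connected) :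
    compCount G (supp x) ≤ d ∧
    (compCount G (supp x) = d →
      (∀ u v, u ∉ supp x → v ∉ supp x → ¬ G.Adj u v) ∧
      (supp x)ᶜ = nbhd G (supp x)) := by
  classical
  obtain ⟨w, μ₀, hwpos, hμ₀, hweig, hPSD⟩ :=
    exists_perron hG hM.herm hM.edge_neg hM.nonedge_zero hM.one_neg
  have hsym : ∀ u v, M u v = M v u := herm_symm_entry hM.herm
  have hoff : ∀ u v, u ≠ v → M u v ≤ 0 := fun u v huv => by
    by_cases hadj : G.Adj u v
    · exact (hM.edge_neg u v hadj).le
    · exact le_of_eq (hM.nonedge_zero u v huv hadj)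
  -- w is orthogonal to the kernel vector x
  have hwx : w ⬝ᵥ x = 0 := by
    have h1 : w ⬝ᵥ (M *ᵥ x) = 0 := by rw [hker, dotProduct_zero]
    have h2 : w ⬝ᵥ (M *ᵥ x) = (M *ᵥ w) ⬝ᵥ x := by
      calc w ⬝ᵥ (M *ᵥ x) = ∑ u, ∑ t, w u * (M u t * x t) :=
            Finset.sum_congr rfl fun u _ => Finset.mul_sum _ _ _
        _ = ∑ t, ∑ u, w u * (M u t * x t) := Finset.sum_comm
        _ = ∑ t, (∑ u, M t u * w u) * x t := Finset.sum_congr rfl fun t _ => by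
            rw [Finset.sum_mul]
            exact Finset.sum_congr rfl fun u _ => by rw [hsym t u]; ring
        _ = (M *ᵥ w) ⬝ᵥ x := rfl
    have h3 : (M *ᵥ w) ⬝ᵥ x = μ₀ * (w ⬝ᵥ x) := by
      rw [hweig, smul_dotProduct]
      rfl
    have h4 : μ₀ * (w ⬝ᵥ x) = 0 := by rw [← h3, ← h2, h1]
    rcases mul_eq_zero.1 h4 with h | h
    · exact absurd h (ne_of_lt hμ₀)
    · exact h
  have zero_of_nonneg : ∀ z : V → ℝ, (∀ u, 0 ≤ z u) → w ⬝ᵥ z = 0 → z = 0 := by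
    intro z hz hwz
    funext u
    have := (Finset.sum_eq_zero_iff_of_nonneg
      (fun t _ => mul_nonneg (hwpos t).le (hz t))).1 hwz u (Finset.mem_univ u)
    exact (mul_eq_zero.1 this).resolve_left (ne_of_gt (hwpos u))
  have hPne : (posSupp x).Nonempty := by
    by_contra hc
    push_neg at hc
    have hz : ∀ u, 0 ≤ -x u := fun u => neg_nonneg.2 (not_lt.1 fun h => by
      have h' : u ∈ posSupp x := h
      rw [hc] at h'
      exact h')
    have hwz : w ⬝ᵥ (-x) = 0 := by rw [dotProduct_neg, hwx, neg_zero]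
    have h0 := zero_of_nonneg (-x) hz hwz
    exact hx0 (by funext u; have := congrFun h0 u; simpa using this)
  have hNne : (negSupp x).Nonempty := by
    by_contra hc
    push_neg at hc
    have hz : ∀ u, 0 ≤ x u := fun u => not_lt.1 fun h => by
      have h' : u ∈ negSupp x := h
      rw [hc] at h'
      exact h'
    exact hx0 (zero_of_nonneg x hz hwx)
  -- no edges between positive and negative support
  have NE : ∀ u ∈ posSupp x, ∀ t ∈ negSupp x, ¬ G.Adj u t := by
    obtain ⟨p, q, hpq⟩ : ∃ p q : ↥(posSupp x), ¬ (G.induce (posSupp x)).Reachable p q := by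
      by_contra hc
      push_neg at hc
      haveI : Nonempty ↥(posSupp x) := ⟨⟨hPne.choose, hPne.choose_spec⟩⟩
      exact hbroken ⟨fun p q => hc p q⟩
    set A : Set V := {t | ∃ ht : t ∈ posSupp x, (G.induce (posSupp x)).Reachable p ⟨t, ht⟩} with hA
    set B : Set V := {t | ∃ ht : t ∈ posSupp x, ¬ (G.induce (posSupp x)).Reachable p ⟨t, ht⟩} with hB
    have hAP : A ⊆ posSupp x := fun t ht => ht.choose
    have hBP : B ⊆ posSupp x := fun t ht => ht.choose
    have hdisj : ∀ t, t ∈ A → t ∉ B := by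
      rintro t ⟨h1, hr⟩ ⟨h2, hnr⟩
      exact hnr hr
    have hcover : ∀ t, t ∈ posSupp x → t ∈ A ∨ t ∈ B := by
      intro t ht
      by_cases hr : (G.induce (posSupp x)).Reachable p ⟨t, ht⟩
      · exact Or.inl ⟨ht, hr⟩
      · exact Or.inr ⟨ht, hr⟩
    have hAB : ∀ a ∈ A, ∀ b ∈ B, ¬ G.Adj a b := by
      rintro a ⟨ha, hra⟩ b ⟨hb, hrb⟩ hadj
      exact hrb (hra.trans (SimpleGraph.Adj.reachable (by simpa using hadj)))
    have hAne : A.Nonempty := ⟨↑p, p.2, SimpleGraph.Reachable.refl p⟩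
    have hBne : B.Nonempty := ⟨↑q, q.2, hpq⟩
    have key := part_noedge hoff hM.edge_neg hM.nonedge_zero hker hwpos hPSD A B
      hAP hBP hdisj hcover hAB hAne hBne
    have key' := part_noedge hoff hM.edge_neg hM.nonedge_zero hker hwpos hPSD B A
      hBP hAP (fun t h1 h2 => hdisj t h2 h1) (fun t ht => (hcover t ht).symm)
      (fun a ha b hb hadj => hAB b hb a ha hadj.symm) hBne hAne
    intro u hu t ht
    rcases hcover u hu with h | h
    · exact key u h t ht
    · exact key' u h t ht
  have hsupp_mem : ∀ t : V, t ∈ supp x ↔ x t < 0 ∨ 0 < x t := fun t => ne_iff_lt_or_gt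
  have hSne : (supp x).Nonempty := by
    obtain ⟨p₀, hp₀⟩ := hPne
    exact ⟨p₀, (hsupp_mem p₀).2 (Or.inr hp₀)⟩
  have hScompl_ne : ∃ v, v ∉ supp x := by
    by_contra hc
    push_neg at hc
    obtain ⟨p₀, hp₀⟩ := hPne
    obtain ⟨n₀, hn₀⟩ := hNne
    have hfin : n₀ ∈ posSupp x := walk_prop (fun v => v ∈ posSupp x) (fun a b hadj ha => by
      rcases (hsupp_mem b).1 (hc b) with h | h
      · exact absurd hadj (NE a ha b h)
      · exact h) (hG.preconnected p₀ n₀) hp₀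
    exact absurd (show x n₀ < 0 from hn₀) (lt_asymm (show (0:ℝ) < x n₀ from hfin))
  -- connected components of G[supp x]
  set CS : (G.induce (supp x)).ConnectedComponent → Set V :=
    fun K => Subtype.val '' K.supp with hCS
  have mem_CS : ∀ (t : V) (K), t ∈ CS K ↔
      ∃ ht : t ∈ supp x, (G.induce (supp x)).connectedComponentMk ⟨t, ht⟩ = K := by
    intro t K
    constructor
    · rintro ⟨s, hs, rfl⟩
      exact ⟨s.2, by rwa [SimpleGraph.ConnectedComponent.mem_supp_iff] at hs⟩
    · rintro ⟨ht, hmk⟩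
      exact ⟨⟨t, ht⟩, (SimpleGraph.ConnectedComponent.mem_supp_iff K ⟨t, ht⟩).2 hmk, rfl⟩
  have CS_sub : ∀ K, CS K ⊆ supp x := by
    rintro K t ⟨s, _, rfl⟩
    exact s.2
  have CS_closed : ∀ K t r, t ∈ CS K → r ∈ supp x → G.Adj t r → r ∈ CS K := by
    intro K t r ht hr hadj
    obtain ⟨ht', hmk⟩ := (mem_CS t K).1 ht
    refine (mem_CS r K).2 ⟨hr, ?_⟩
    rw [← hmk]
    exact SimpleGraph.ConnectedComponent.sound
      (SimpleGraph.Adj.reachable (by simpa using hadj.symm))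
  have CS_disj : ∀ K K' t, t ∈ CS K → t ∈ CS K' → K = K' := by
    intro K K' t h1 h2
    obtain ⟨ht1, hm1⟩ := (mem_CS t K).1 h1
    obtain ⟨ht2, hm2⟩ := (mem_CS t K').1 h2
    rw [← hm1, ← hm2]
  have CS_ne : ∀ K, ∃ t, t ∈ CS K := by
    intro K
    obtain ⟨s, hs⟩ := K.exists_rep
    exact ⟨↑s, (mem_CS ↑s K).2 ⟨s.2, hs⟩⟩
  have sign_pure : ∀ K, (∀ t ∈ CS K, 0 < x t) ∨ (∀ t ∈ CS K, x t < 0) := by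
    intro K
    obtain ⟨r, hr⟩ := K.exists_rep
    have hreach : ∀ t, ∀ ht : t ∈ CS K,
        (G.induce (supp x)).Reachable r ⟨t, CS_sub K ht⟩ := by
      intro t ht
      obtain ⟨ht', hmk⟩ := (mem_CS t K).1 ht
      exact SimpleGraph.ConnectedComponent.exact (hr.trans hmk.symm)
    by_cases hrpos : 0 < x ↑r
    · left
      intro t ht
      exact walk_prop (fun s : ↥(supp x) => 0 < x ↑s)
        (fun a b hadj ha => by
          rcases (hsupp_mem ↑b).1 b.2 with h | h
          · exact absurd (by simpa using hadj : G.Adj ↑a ↑b) (NE ↑a ha ↑b h)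
          · exact h)
        (hreach t ht) hrpos
    · right
      have hrneg : x ↑r < 0 := ((hsupp_mem ↑r).1 r.2).resolve_right hrpos
      intro t ht
      exact walk_prop (fun s : ↥(supp x) => x ↑s < 0)
        (fun a b hadj ha => by
          rcases (hsupp_mem ↑b).1 b.2 with h | h
          · exact h
          · exact absurd ((by simpa using hadj : G.Adj ↑a ↑b).symm) (NE ↑b h ↑a ha))
        (hreach t ht) hrneg
  set yC : (G.induce (supp x)).ConnectedComponent → (V → ℝ) :=
    fun K => fun s => if s ∈ CS K then x s else 0 with hyC
  have MyK_in : ∀ K, ∀ u ∈ supp x, (M *ᵥ yC K) u = 0 := by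
    intro K u hu
    by_cases huK : u ∈ CS K
    · have h0 : ∑ t, M u t * x t = 0 := congrFun hker u
      have he : (M *ᵥ yC K) u = ∑ t, M u t * x t := by
        refine Finset.sum_congr rfl fun t _ => ?_
        show M u t * yC K t = M u t * x t
        by_cases htK : t ∈ CS K
        · simp [hyC, htK]
        · by_cases hxt : t ∈ supp x
          · have hM0 : M u t = 0 := by
              have hne : u ≠ t := fun he => htK (he ▸ huK)
              by_cases hadj : G.Adj u t
              · exact absurd (CS_closed K u t huK hxt hadj) htK
              · exact hM.nonedge_zero u t hne hadj
            rw [hM0, zero_mul, zero_mul]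
          · have hx00 : x t = 0 := not_not.1 hxt
            simp [hyC, htK, hx00]
      rw [he, h0]
    · refine Finset.sum_eq_zero fun t _ => ?_
      show M u t * yC K t = 0
      by_cases htK : t ∈ CS K
      · have hne : u ≠ t := fun he => huK (he ▸ htK)
        have hM0 : M u t = 0 := by
          by_cases hadj : G.Adj u t
          · exact absurd (CS_closed K t u htK hu hadj.symm) huK
          · exact hM.nonedge_zero u t hne hadj
        rw [hM0, zero_mul]
      · simp [hyC, htK]
  have nbhd_char : ∀ K, ∀ u, u ∉ supp x →
      ((M *ᵥ yC K) u ≠ 0 ↔ ∃ t ∈ CS K, G.Adj u t) := by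
    intro K u hu
    have hterm_ne : ∀ t, t ∈ CS K → G.Adj u t → M u t * yC K t ≠ 0 := by
      intro t htK hadj
      have h1 : M u t < 0 := hM.edge_neg u t hadj
      have h2 : yC K t = x t := by simp [hyC, htK]
      rw [h2]
      rcases sign_pure K with hs | hs
      · exact ne_of_lt (mul_neg_of_neg_of_pos h1 (hs t htK))
      · exact ne_of_gt (mul_pos_of_neg_of_neg h1 (hs t htK))
    constructor
    · intro hne
      by_contra hall
      push_neg at hall
      refine hne (Finset.sum_eq_zero fun t _ => ?_)
      show M u t * yC K t = 0
      by_cases htK : t ∈ CS K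
      · have hnet : u ≠ t := fun he => hu (CS_sub K (he ▸ htK))
        rw [hM.nonedge_zero u t hnet (hall t htK), zero_mul]
      · simp [hyC, htK]
    · rintro ⟨t, htK, hadj⟩ h0
      rcases sign_pure K with hs | hs
      · have hnp : ∀ t' ∈ Finset.univ, M u t' * yC K t' ≤ 0 := by
          intro t' _
          by_cases ht' : t' ∈ CS K
          · have hnet : u ≠ t' := fun he => hu (CS_sub K (he ▸ ht'))
            have h2 : yC K t' = x t' := by simp [hyC, ht']
            rw [h2]
            exact mul_nonpos_of_nonpos_of_nonneg (hoff u t' hnet) (hs t' ht').le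
          · simp [hyC, ht']
        have := (Finset.sum_eq_zero_iff_of_nonpos hnp).1 h0 t (Finset.mem_univ t)
        exact hterm_ne t htK hadj this
      · have hnn : ∀ t' ∈ Finset.univ, 0 ≤ M u t' * yC K t' := by
          intro t' _
          by_cases ht' : t' ∈ CS K
          · have hnet : u ≠ t' := fun he => hu (CS_sub K (he ▸ ht'))
            have h2 : yC K t' = x t' := by simp [hyC, ht']
            rw [h2]
            nlinarith [hoff u t' hnet, hs t' ht']
          · simp [hyC, ht']
        have := (Finset.sum_eq_zero_iff_of_nonneg hnn).1 h0 t (Finset.mem_univ t)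
        exact hterm_ne t htK hadj this
  have crossK : ∀ K K', yC K ⬝ᵥ (M *ᵥ yC K') = 0 := by
    intro K K'
    refine Finset.sum_eq_zero fun u _ => ?_
    show yC K u * (M *ᵥ yC K') u = 0
    by_cases huK : u ∈ CS K
    · rw [MyK_in K' u (CS_sub K huK), mul_zero]
    · simp [hyC, huK]
  have wyK_ne : ∀ K, w ⬝ᵥ yC K ≠ 0 := by
    intro K
    obtain ⟨t₀, ht₀⟩ := CS_ne K
    rcases sign_pure K with hs | hs
    · refine ne_of_gt (Finset.sum_pos' (fun t _ => ?_) ⟨t₀, Finset.mem_univ t₀, ?_⟩)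
      · show 0 ≤ w t * yC K t
        by_cases htK : t ∈ CS K
        · have h2 : yC K t = x t := by simp [hyC, htK]
          rw [h2]
          exact mul_nonneg (hwpos t).le (hs t htK).le
        · simp [hyC, htK]
      · show 0 < w t₀ * yC K t₀
        have h2 : yC K t₀ = x t₀ := by simp [hyC, ht₀]
        rw [h2]
        exact mul_pos (hwpos t₀) (hs t₀ ht₀)
    · refine ne_of_lt ?_
      have h1 : 0 < ∑ t, w t * (- yC K t) := by
        refine Finset.sum_pos' (fun t _ => ?_) ⟨t₀, Finset.mem_univ t₀, ?_⟩
        · by_cases htK : t ∈ CS K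
          · have h2 : yC K t = x t := by simp [hyC, htK]
            rw [h2]
            nlinarith [hwpos t, hs t htK]
          · simp [hyC, htK]
        · have h2 : yC K t₀ = x t₀ := by simp [hyC, ht₀]
          rw [h2]
          nlinarith [hwpos t₀, hs t₀ ht₀]
      have h2 : w ⬝ᵥ yC K = - ∑ t, w t * (- yC K t) := by
        rw [← Finset.sum_neg_distrib]
        exact Finset.sum_congr rfl fun t _ => by ring
      rw [h2]
      linarith
  have nbhd_sub : ∀ K K', nbhd G (CS K) ⊆ nbhd G (CS K') := by
    intro K K' u hu
    obtain ⟨huK, t, htK, hadj⟩ := hu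
    have huS : u ∉ supp x := fun huS => huK (CS_closed K t u htK huS hadj)
    by_cases hKK : K = K'
    · subst hKK
      exact ⟨huK, t, htK, hadj⟩
    · set α := w ⬝ᵥ yC K' with hα
      set β := w ⬝ᵥ yC K with hβ
      set y := α • yC K - β • yC K' with hy
      have hwy : w ⬝ᵥ y = 0 := by
        rw [hy, dotProduct_sub, dotProduct_smul, dotProduct_smul, hα, hβ]
        simp only [smul_eq_mul]
        ring
      have hMy : M *ᵥ y = α • (M *ᵥ yC K) - β • (M *ᵥ yC K') := by
        rw [hy, Matrix.mulVec_sub, Matrix.mulVec_smul, Matrix.mulVec_smul]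
      have hquad : y ⬝ᵥ (M *ᵥ y) = 0 := by
        rw [hMy, hy, sub_dotProduct, smul_dotProduct, smul_dotProduct,
          dotProduct_sub, dotProduct_sub, dotProduct_smul, dotProduct_smul,
          dotProduct_smul, dotProduct_smul,
          crossK K K, crossK K K', crossK K' K, crossK K' K']
        simp
      have hMy0 : M *ᵥ y = 0 := (hPSD y hwy).2 hquad
      have heq : ∀ s, α * (M *ᵥ yC K) s = β * (M *ᵥ yC K') s := by
        intro s
        have h5 := congrFun hMy0 s
        rw [hMy] at h5
        have h6 : α * (M *ᵥ yC K) s - β * (M *ᵥ yC K') s = 0 := h5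
        linarith
      have h3 : (M *ᵥ yC K) u ≠ 0 := (nbhd_char K u huS).2 ⟨t, htK, hadj.symm⟩
      have h4 : (M *ᵥ yC K') u ≠ 0 := by
        intro h0
        have h7 := heq u
        rw [h0, mul_zero] at h7
        rcases mul_eq_zero.1 h7 with h | h
        · exact wyK_ne K' h
        · exact h3 h
      obtain ⟨t', ht', hadj'⟩ := (nbhd_char K' u huS).1 h4
      exact ⟨fun hc => huS (CS_sub K' hc), t', ht', hadj'.symm⟩
  have count_le : ∀ u, u ∈ nbhd G (supp x) →
      ∀ K, ∃ t, t ∈ CS K ∧ G.Adj u t := by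
    intro u hu K
    obtain ⟨huS, s, hs, hadj⟩ := hu
    have h1 : u ∈ nbhd G (CS ((G.induce (supp x)).connectedComponentMk ⟨s, hs⟩)) := by
      refine ⟨fun hc => huS (CS_sub _ hc), s, ?_, hadj⟩
      exact (mem_CS s _).2 ⟨hs, rfl⟩
    obtain ⟨_, t, htK, hadj'⟩ := nbhd_sub _ K h1
    exact ⟨t, htK, hadj'.symm⟩
  have main_count : ∀ u, u ∈ nbhd G (supp x) →
      ∃ R : Set V, R ⊆ G.neighborSet u ∧ R ⊆ supp x ∧ R.ncard = compCount G (supp x) := by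
    intro u hu
    have hf : ∀ K : (G.induce (supp x)).ConnectedComponent, ∃ t, t ∈ CS K ∧ G.Adj u t :=
      count_le u hu
    choose f hf1 hf2 using hf
    have hinj : Function.Injective f := by
      intro K K' he
      exact CS_disj K K' (f K) (hf1 K) (by rw [he]; exact (hf1 K'))
    refine ⟨Set.range f, ?_, ?_, ?_⟩
    · rintro t ⟨K, rfl⟩
      exact hf2 K
    · rintro t ⟨K, rfl⟩
      exact CS_sub K (hf1 K)
    · rw [← Nat.card_coe_set_eq, Nat.card_range_of_injective hinj]
      rfl
  obtain ⟨u₀, hu₀⟩ : ∃ u₀, u₀ ∈ nbhd G (supp x) := by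
    obtain ⟨t₀, ht₀⟩ := hScompl_ne
    obtain ⟨s₀, hs₀⟩ := hSne
    obtain ⟨a, b, hadj, hna, hb⟩ :=
      exists_cross (fun v => v ∈ supp x) (hG.preconnected t₀ s₀) ht₀ hs₀
    exact ⟨a, hna, b, hb, hadj.symm⟩
  obtain ⟨R₀, hR₀n, hR₀s, hR₀c⟩ := main_count u₀ hu₀
  have hle : compCount G (supp x) ≤ d := by
    rw [← hR₀c]
    exact le_trans (Set.ncard_le_ncard hR₀n (Set.toFinite _)) (hd u₀)
  refine ⟨hle, ?_⟩
  intro hkd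
  have KEY : ∀ u, u ∈ nbhd G (supp x) → ∀ t, G.Adj u t → t ∈ supp x := by
    intro u hu t hadj
    by_contra htS
    obtain ⟨R, hRn, hRs, hRc⟩ := main_count u hu
    have htR : t ∉ R := fun h => htS (hRs h)
    have h1 : (insert t R).ncard = d + 1 := by
      rw [Set.ncard_insert_of_notMem htR (Set.toFinite R), hRc, hkd]
    have h2 : insert t R ⊆ G.neighborSet u := Set.insert_subset hadj hRn
    have h3 := Set.ncard_le_ncard h2 (Set.toFinite _)
    rw [h1] at h3
    have h4 := hd u
    omega
  have propQ : ∀ v, v ∈ supp x ∨ v ∈ nbhd G (supp x) := by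
    obtain ⟨s₀, hs₀⟩ := hSne
    intro v
    refine walk_prop (fun v => v ∈ supp x ∨ v ∈ nbhd G (supp x)) ?_
      (hG.preconnected s₀ v) (Or.inl hs₀)
    intro a b hadj ha
    rcases ha with ha | ha
    · by_cases hb : b ∈ supp x
      · exact Or.inl hb
      · exact Or.inr ⟨hb, a, ha, hadj⟩
    · exact Or.inl (KEY a ha b hadj)
  constructor
  · intro u v huS hvS hadj
    rcases propQ u with h | h
    · exact huS h
    · exact hvS (KEY u h v hadj)
  · ext v
    constructor
    · intro hv
      exact (propQ v).resolve_left hv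
    · intro hv
      exact hv.1
end

section
/- Let H_q be the incidence graph of a finite projective plane of order q (a (q+1)-regular bipartite graph on 2(q²+q+1) vertices) and A_q its adjacency matrix. Then the matrix M_q := √q·I − A_q belongs to M(H_q) and has corank q² + q. -/
open Matrix Set

variable {V : Type*} [Fintype V] [DecidableEq V]

open scoped Classical

variable (P Lns : Type*) [Membership P Lns] [Fintype P] [Fintype Lns]
  [DecidableEq P] [DecidableEq Lns] [Configuration.ProjectivePlane P Lns]

/-- The incidence graph of a point-line configuration: points and lines are the
vertices, with an edge for each incident point-line pair. -/
def incidenceGraph : SimpleGraph (P ⊕ Lns) :=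
  SimpleGraph.fromRel (fun x y => ∃ p l, x = Sum.inl p ∧ y = Sum.inr l ∧ p ∈ l)

/-- The adjacency matrix (over ℝ) of the incidence graph. -/
noncomputable def adjMat : Matrix (P ⊕ Lns) (P ⊕ Lns) ℝ :=
  Matrix.of (fun x y => if (incidenceGraph P Lns).Adj x y then (1 : ℝ) else 0)

/-- The shifted adjacency matrix `M_q = √q · I − A_q`. -/
noncomputable def shiftedMat : Matrix (P ⊕ Lns) (P ⊕ Lns) ℝ :=
  Real.sqrt (Configuration.ProjectivePlane.order P Lns) •
      (1 : Matrix (P ⊕ Lns) (P ⊕ Lns) ℝ) - adjMat P Lns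

set_option linter.unusedSectionVars false
set_option maxHeartbeats 1000000
namespace Stmt10Aux
variable {P Lns}

lemma adj_inl_inr (p : P) (l : Lns) :
    (incidenceGraph P Lns).Adj (Sum.inl p) (Sum.inr l) ↔ p ∈ l := by
  simp [incidenceGraph, SimpleGraph.fromRel_adj]

lemma not_adj_inl_inl (p p' : P) : ¬ (incidenceGraph P Lns).Adj (Sum.inl p) (Sum.inl p') := by
  simp [incidenceGraph, SimpleGraph.fromRel_adj]

lemma not_adj_inr_inr (l l' : Lns) : ¬ (incidenceGraph P Lns).Adj (Sum.inr l) (Sum.inr l') := by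
  simp [incidenceGraph, SimpleGraph.fromRel_adj]

lemma adj_inr_inl (l : Lns) (p : P) :
    (incidenceGraph P Lns).Adj (Sum.inr l) (Sum.inl p) ↔ p ∈ l := by
  rw [SimpleGraph.adj_comm]; exact adj_inl_inr p l

lemma card_lines_through (p : P) :
    (Finset.univ.filter fun l : Lns => p ∈ l).card
      = Configuration.ProjectivePlane.order P Lns + 1 := by
  have h := Configuration.ProjectivePlane.lineCount_eq Lns p
  rwa [Configuration.lineCount, Nat.card_eq_fintype_card, Fintype.card_subtype] at h

lemma card_points_on (l : Lns) :
    (Finset.univ.filter fun p : P => p ∈ l).card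
      = Configuration.ProjectivePlane.order P Lns + 1 := by
  have h := Configuration.ProjectivePlane.pointCount_eq P l
  rwa [Configuration.pointCount, Nat.card_eq_fintype_card, Fintype.card_subtype] at h

lemma card_lines_through_pair {p p' : P} (h : p ≠ p') :
    (Finset.univ.filter fun l : Lns => p ∈ l ∧ p' ∈ l).card = 1 := by
  rw [Finset.card_eq_one]
  refine ⟨Configuration.HasLines.mkLine (L := Lns) h, ?_⟩
  ext l
  simp only [Finset.mem_filter, Finset.mem_univ, true_and, Finset.mem_singleton]
  constructor
  · rintro ⟨h1, h2⟩
    exact (Configuration.Nondegenerate.eq_or_eq (P := P) (L := Lns) h1 h2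
      (Configuration.HasLines.mkLine_ax (L := Lns) h).1
      (Configuration.HasLines.mkLine_ax (L := Lns) h).2).resolve_left h
  · rintro rfl
    exact Configuration.HasLines.mkLine_ax h

lemma card_points_on_pair {l l' : Lns} (h : l ≠ l') :
    (Finset.univ.filter fun p : P => p ∈ l ∧ p ∈ l').card = 1 := by
  rw [Finset.card_eq_one]
  refine ⟨Configuration.HasPoints.mkPoint (P := P) h, ?_⟩
  ext p
  simp only [Finset.mem_filter, Finset.mem_univ, true_and, Finset.mem_singleton]
  constructor
  · rintro ⟨h1, h2⟩
    exact ((Configuration.Nondegenerate.eq_or_eq (P := P) (L := Lns)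
      (Configuration.HasPoints.mkPoint_ax (P := P) h).1 h1
      (Configuration.HasPoints.mkPoint_ax (P := P) h).2 h2).resolve_right h).symm
  · rintro rfl
    exact Configuration.HasPoints.mkPoint_ax h

/-- Key double sum over lines through a point. -/
lemma sumA (p : P) (f : P → ℝ) :
    ∑ l : Lns, (if p ∈ l then ∑ p' : P, (if p' ∈ l then f p' else 0) else 0)
      = (Configuration.ProjectivePlane.order P Lns : ℝ) * f p + ∑ p', f p' := by
  set q := Configuration.ProjectivePlane.order P Lns
  have step1 : ∀ l : Lns, (if p ∈ l then ∑ p' : P, (if p' ∈ l then f p' else 0) else 0)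
      = ∑ p' : P, (if p ∈ l ∧ p' ∈ l then f p' else 0) := by
    intro l; by_cases h : p ∈ l <;> simp [h]
  simp_rw [step1]
  rw [Finset.sum_comm]
  have step2 : ∀ p' : P, ∑ l : Lns, (if p ∈ l ∧ p' ∈ l then f p' else 0)
      = f p' + (if p' = p then (q : ℝ) * f p' else 0) := by
    intro p'
    have h0 : ∑ l : Lns, (if p ∈ l ∧ p' ∈ l then f p' else 0)
        = ((Finset.univ.filter fun l : Lns => p ∈ l ∧ p' ∈ l).card : ℝ) * f p' := by
      rw [← Finset.sum_filter, Finset.sum_const, nsmul_eq_mul]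
    rw [h0]
    by_cases h : p' = p
    · subst h
      have hc : (Finset.univ.filter fun l : Lns => p' ∈ l ∧ p' ∈ l)
          = Finset.univ.filter fun l : Lns => p' ∈ l := by ext l; simp
      rw [hc, card_lines_through]
      simp; push_cast; ring
    · rw [card_lines_through_pair (Ne.symm h)]; simp [h]
  simp_rw [step2]
  rw [Finset.sum_add_distrib, Finset.sum_ite_eq' Finset.univ p (fun p' => (q:ℝ) * f p')]
  simp [add_comm]

/-- Dual version: double sum over points on a line. -/
lemma sumA' (l : Lns) (g : Lns → ℝ) :
    ∑ p : P, (if p ∈ l then ∑ l' : Lns, (if p ∈ l' then g l' else 0) else 0)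
      = (Configuration.ProjectivePlane.order P Lns : ℝ) * g l + ∑ l', g l' := by
  set q := Configuration.ProjectivePlane.order P Lns
  have step1 : ∀ p : P, (if p ∈ l then ∑ l' : Lns, (if p ∈ l' then g l' else 0) else 0)
      = ∑ l' : Lns, (if p ∈ l ∧ p ∈ l' then g l' else 0) := by
    intro p; by_cases h : p ∈ l <;> simp [h]
  simp_rw [step1]
  rw [Finset.sum_comm]
  have step2 : ∀ l' : Lns, ∑ p : P, (if p ∈ l ∧ p ∈ l' then g l' else 0)
      = g l' + (if l' = l then (q : ℝ) * g l' else 0) := by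
    intro l'
    have h0 : ∑ p : P, (if p ∈ l ∧ p ∈ l' then g l' else 0)
        = ((Finset.univ.filter fun p : P => p ∈ l ∧ p ∈ l').card : ℝ) * g l' := by
      rw [← Finset.sum_filter, Finset.sum_const, nsmul_eq_mul]
    rw [h0]
    by_cases h : l' = l
    · subst h
      have hc : (Finset.univ.filter fun p : P => p ∈ l' ∧ p ∈ l')
          = Finset.univ.filter fun p : P => p ∈ l' := by ext p; simp
      rw [hc, card_points_on]
      simp; push_cast; ring
    · rw [card_points_on_pair (Ne.symm h)]; simp [h]
  simp_rw [step2]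
  rw [Finset.sum_add_distrib, Finset.sum_ite_eq' Finset.univ l (fun l' => (q:ℝ) * g l')]
  simp [add_comm]

lemma sumB (g : Lns → ℝ) :
    ∑ p : P, ∑ l : Lns, (if p ∈ l then g l else 0)
      = ((Configuration.ProjectivePlane.order P Lns : ℝ) + 1) * ∑ l, g l := by
  rw [Finset.sum_comm, Finset.mul_sum]
  refine Finset.sum_congr rfl fun l _ => ?_
  rw [← Finset.sum_filter, Finset.sum_const, nsmul_eq_mul, card_points_on]
  push_cast; ring

lemma sumB' (f : P → ℝ) :
    ∑ l : Lns, ∑ p : P, (if p ∈ l then f p else 0)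
      = ((Configuration.ProjectivePlane.order P Lns : ℝ) + 1) * ∑ p, f p := by
  rw [Finset.sum_comm, Finset.mul_sum]
  refine Finset.sum_congr rfl fun p _ => ?_
  rw [← Finset.sum_filter, Finset.sum_const, nsmul_eq_mul, card_lines_through]
  push_cast; ring

lemma mulVec_inl (x : P ⊕ Lns → ℝ) (p : P) :
    (shiftedMat P Lns *ᵥ x) (Sum.inl p)
      = Real.sqrt (Configuration.ProjectivePlane.order P Lns) * x (Sum.inl p)
        - ∑ l : Lns, (if p ∈ l then x (Sum.inr l) else 0) := by
  simp only [shiftedMat, mulVec, dotProduct, Fintype.sum_sum_type, adjMat,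
    Matrix.sub_apply, Matrix.smul_apply, Matrix.of_apply, Matrix.one_apply, smul_eq_mul,
    sub_mul, Finset.sum_sub_distrib, not_adj_inl_inl, adj_inl_inr, if_false, ite_mul,
    one_mul, zero_mul, mul_ite, mul_zero, mul_one, zero_sub]
  simp [Finset.sum_ite_eq]

lemma mulVec_inr (x : P ⊕ Lns → ℝ) (l : Lns) :
    (shiftedMat P Lns *ᵥ x) (Sum.inr l)
      = Real.sqrt (Configuration.ProjectivePlane.order P Lns) * x (Sum.inr l)
        - ∑ p : P, (if p ∈ l then x (Sum.inl p) else 0) := by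
  simp only [shiftedMat, mulVec, dotProduct, Fintype.sum_sum_type, adjMat,
    Matrix.sub_apply, Matrix.smul_apply, Matrix.of_apply, Matrix.one_apply, smul_eq_mul,
    sub_mul, Finset.sum_sub_distrib, not_adj_inr_inr, adj_inr_inl, if_false, ite_mul,
    one_mul, zero_mul, mul_ite, mul_zero, mul_one, zero_sub]
  simp [Finset.sum_ite_eq]

lemma mem_ker_iff (x : P ⊕ Lns → ℝ) :
    x ∈ LinearMap.ker (shiftedMat P Lns).mulVecLin ↔
      (∀ p : P, Real.sqrt (Configuration.ProjectivePlane.order P Lns) * x (Sum.inl p)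
          = ∑ l : Lns, (if p ∈ l then x (Sum.inr l) else 0)) ∧
      (∀ l : Lns, Real.sqrt (Configuration.ProjectivePlane.order P Lns) * x (Sum.inr l)
          = ∑ p : P, (if p ∈ l then x (Sum.inl p) else 0)) := by
  rw [LinearMap.mem_ker, mulVecLin_apply, funext_iff]
  rw [Sum.forall]
  constructor
  · rintro ⟨h1, h2⟩
    exact ⟨fun p => by have := h1 p; rw [mulVec_inl] at this; simpa [sub_eq_zero] using this,
      fun l => by have := h2 l; rw [mulVec_inr] at this; simpa [sub_eq_zero] using this⟩
  · rintro ⟨h1, h2⟩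
    exact ⟨fun p => by rw [mulVec_inl, Pi.zero_apply, sub_eq_zero]; exact h1 p,
      fun l => by rw [mulVec_inr, Pi.zero_apply, sub_eq_zero]; exact h2 l⟩


noncomputable def sumF (P : Type*) [Fintype P] : (P → ℝ) →ₗ[ℝ] ℝ where
  toFun f := ∑ p, f p
  map_add' f g := by simp [Finset.sum_add_distrib]
  map_smul' c f := by simp [Finset.mul_sum]

lemma nonempty_point (P Lns : Type*) [Membership P Lns] [Configuration.ProjectivePlane P Lns] :
    Nonempty P := by
  obtain ⟨p, -⟩ := Configuration.ProjectivePlane.exists_config (P := P) (L := Lns)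
  exact ⟨p⟩

lemma nonempty_line (P Lns : Type*) [Membership P Lns] [Configuration.ProjectivePlane P Lns] :
    Nonempty Lns := by
  obtain ⟨-, -, -, l, -⟩ := Configuration.ProjectivePlane.exists_config (P := P) (L := Lns)
  exact ⟨l⟩

lemma finrank_ker_sumF {P : Type*} [Fintype P] (hP : Nonempty P) :
    Module.finrank ℝ (LinearMap.ker (sumF P)) + 1 = Fintype.card P := by
  have hsurj : Function.Surjective (sumF P) := by
    intro r
    refine ⟨fun _ => r / Fintype.card P, ?_⟩
    have hc : (Fintype.card P : ℝ) ≠ 0 := by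
      simp [Fintype.card_ne_zero]
    simp only [sumF, LinearMap.coe_mk, AddHom.coe_mk, Finset.sum_const, Finset.card_univ,
      nsmul_eq_mul]
    field_simp
  have h1 := LinearMap.finrank_range_add_finrank_ker (sumF P)
  rw [LinearMap.range_eq_top.mpr hsurj] at h1
  simp only [finrank_top, Module.finrank_self] at h1
  rw [Module.finrank_fintype_fun_eq_card] at h1
  omega

lemma sqrt_facts :
    0 < Real.sqrt (Configuration.ProjectivePlane.order P Lns) ∧
    (Real.sqrt (Configuration.ProjectivePlane.order P Lns)) ^ 2
      = (Configuration.ProjectivePlane.order P Lns : ℝ) := by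
  have h2 : 1 < Configuration.ProjectivePlane.order P Lns :=
    Configuration.ProjectivePlane.one_lt_order P Lns
  constructor
  · apply Real.sqrt_pos.mpr
    have : 0 < Configuration.ProjectivePlane.order P Lns := lt_trans Nat.zero_lt_one h2
    exact_mod_cast this
  · exact Real.sq_sqrt (by positivity)

lemma finrank_ker_shifted :
    Module.finrank ℝ (LinearMap.ker (shiftedMat P Lns).mulVecLin) =
      (Configuration.ProjectivePlane.order P Lns) ^ 2 +
        Configuration.ProjectivePlane.order P Lns := by
  classical
  set q := Configuration.ProjectivePlane.order P Lns with hq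
  set s := Real.sqrt q with hsdef
  obtain ⟨hs0, hs2⟩ := sqrt_facts (P := P) (Lns := Lns)
  have hsne : s ≠ 0 := ne_of_gt hs0
  have hs2' : s ^ 2 = (q : ℝ) := hs2
  have hP : Nonempty P := nonempty_point P Lns
  -- the projection map
  have welldef : ∀ x ∈ LinearMap.ker (shiftedMat P Lns).mulVecLin,
      (fun p => x (Sum.inl p)) ∈ LinearMap.ker (sumF P) := by
    intro x hx
    obtain ⟨h1, h2⟩ := (mem_ker_iff x).mp hx
    set SP := ∑ p, x (Sum.inl p) with hSP
    set SL := ∑ l, x (Sum.inr l) with hSL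
    have e1 : s * SP = ((q : ℝ) + 1) * SL := by
      rw [hSP, Finset.mul_sum]
      simp_rw [show s = Real.sqrt (Configuration.ProjectivePlane.order P Lns) from rfl, h1]
      exact sumB _
    have e2 : s * SL = ((q : ℝ) + 1) * SP := by
      rw [hSL, Finset.mul_sum]
      simp_rw [show s = Real.sqrt (Configuration.ProjectivePlane.order P Lns) from rfl, h2]
      exact sumB' _
    have e3 : (q : ℝ) * SP = ((q : ℝ) + 1) ^ 2 * SP := by
      calc (q : ℝ) * SP = s * (s * SP) := by rw [← hs2']; ring
        _ = s * (((q : ℝ) + 1) * SL) := by rw [e1]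
        _ = ((q : ℝ) + 1) * (s * SL) := by ring
        _ = ((q : ℝ) + 1) * (((q : ℝ) + 1) * SP) := by rw [e2]
        _ = ((q : ℝ) + 1) ^ 2 * SP := by ring
    have h4 : (((q : ℝ) + 1) ^ 2 - (q : ℝ)) * SP = 0 := by linear_combination -e3
    have hSP0 : SP = 0 := by
      rcases mul_eq_zero.mp h4 with h | h
      · exfalso
        have hq0 : (0 : ℝ) ≤ (q : ℝ) := Nat.cast_nonneg q
        nlinarith
      · exact h
    simpa [sumF, LinearMap.mem_ker] using hSP0
  let φ : LinearMap.ker (shiftedMat P Lns).mulVecLin →ₗ[ℝ] LinearMap.ker (sumF P) :=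
    { toFun := fun x => ⟨fun p => x.1 (Sum.inl p), welldef x.1 x.2⟩
      map_add' := fun x y => rfl
      map_smul' := fun c x => rfl }
  have hinj : Function.Injective φ := by
    intro x y hxy
    have hxy' : ∀ p : P, x.1 (Sum.inl p) = y.1 (Sum.inl p) := by
      intro p
      exact congrFun (congrArg Subtype.val hxy) p
    obtain ⟨hx1, hx2⟩ := (mem_ker_iff x.1).mp x.2
    obtain ⟨hy1, hy2⟩ := (mem_ker_iff y.1).mp y.2
    apply Subtype.ext
    funext v
    cases v with
    | inl p => exact hxy' p
    | inr l =>
      have : s * x.1 (Sum.inr l) = s * y.1 (Sum.inr l) := by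
        rw [hx2 l, hy2 l]
        exact Finset.sum_congr rfl fun p _ => by rw [hxy' p]
      exact mul_left_cancel₀ hsne this
  have hsurj : Function.Surjective φ := by
    rintro ⟨f, hf⟩
    have hf0 : ∑ p, f p = 0 := by simpa [sumF, LinearMap.mem_ker] using hf
    set x : P ⊕ Lns → ℝ :=
      Sum.elim f (fun l => s⁻¹ * ∑ p : P, (if p ∈ l then f p else 0)) with hx
    have hmem : x ∈ LinearMap.ker (shiftedMat P Lns).mulVecLin := by
      rw [mem_ker_iff]
      constructor
      · intro p
        have expand : ∑ l : Lns, (if p ∈ l then x (Sum.inr l) else 0)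
            = s⁻¹ * ∑ l : Lns, (if p ∈ l then ∑ p' : P, (if p' ∈ l then f p' else 0) else 0) := by
          rw [Finset.mul_sum]
          refine Finset.sum_congr rfl fun l _ => ?_
          by_cases h : p ∈ l <;> simp [h, hx]
        rw [expand, sumA, hf0, add_zero, hx]
        simp only [Sum.elim_inl]
        rw [← hs2']
        field_simp
        ring
        rw [Real.sqrt_sq (show (0:ℝ) ≤ s from hs0.le)]
      · intro l
        simp only [hx, Sum.elim_inr, Sum.elim_inl]
        field_simp
        rfl
    exact ⟨⟨x, hmem⟩, by apply Subtype.ext; funext p; simp [hx, φ]⟩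
  have := LinearEquiv.finrank_eq (LinearEquiv.ofBijective φ ⟨hinj, hsurj⟩)
  rw [this]
  have hcard : Fintype.card P = q ^ 2 + q + 1 := Configuration.ProjectivePlane.card_points P Lns
  have := finrank_ker_sumF hP
  omega


lemma hermA : (adjMat P Lns).IsHermitian := by
  show (adjMat P Lns)ᴴ = adjMat P Lns
  ext i j
  simp only [conjTranspose_apply, adjMat, Matrix.of_apply, star_trivial]
  exact if_congr (SimpleGraph.adj_comm _ _ _) rfl rfl

lemma herm : (shiftedMat P Lns).IsHermitian := by
  have h1 : ((Real.sqrt (Configuration.ProjectivePlane.order P Lns)) •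
      (1 : Matrix (P ⊕ Lns) (P ⊕ Lns) ℝ)).IsHermitian := by
    show _ᴴ = _
    rw [conjTranspose_smul, conjTranspose_one, star_trivial]
  exact h1.sub hermA

lemma eigen_const (h : (shiftedMat P Lns).IsHermitian) (i : P ⊕ Lns)
    (hi : h.eigenvalues i < 0) :
    ∃ a : ℝ, a ≠ 0 ∧ ∀ w : P ⊕ Lns, h.eigenvectorBasis i w = a := by
  classical
  set q := Configuration.ProjectivePlane.order P Lns with hq
  set s := Real.sqrt q with hsdef
  obtain ⟨hs0, hs2⟩ := sqrt_facts (P := P) (Lns := Lns)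
  have hs2' : s ^ 2 = (q : ℝ) := hs2
  have hsne : s ≠ 0 := ne_of_gt hs0
  obtain ⟨p₀⟩ := nonempty_point P Lns
  obtain ⟨l₀⟩ := nonempty_line P Lns
  set v : (P ⊕ Lns) → ℝ := ⇑(h.eigenvectorBasis i) with hv
  have hev : shiftedMat P Lns *ᵥ v = h.eigenvalues i • v := h.mulVec_eigenvectorBasis i
  set μ := h.eigenvalues i with hμ
  set t := s - μ with ht
  have hts : s < t := by rw [ht]; linarith
  have ht0 : 0 < t := lt_of_le_of_lt (by rw [hsdef]; exact Real.sqrt_nonneg _) hts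
  have hA1 : ∀ p : P, ∑ l : Lns, (if p ∈ l then v (Sum.inr l) else 0) = t * v (Sum.inl p) := by
    intro p
    have h1 := congrFun hev (Sum.inl p)
    rw [mulVec_inl] at h1
    simp only [Pi.smul_apply, smul_eq_mul] at h1
    rw [ht]
    linear_combination -h1
  have hA2 : ∀ l : Lns, ∑ p : P, (if p ∈ l then v (Sum.inl p) else 0) = t * v (Sum.inr l) := by
    intro l
    have h1 := congrFun hev (Sum.inr l)
    rw [mulVec_inr] at h1
    simp only [Pi.smul_apply, smul_eq_mul] at h1
    rw [ht]
    linear_combination -h1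
  have hsnn : 0 ≤ s := le_of_lt hs0
  have ht2 : (q : ℝ) < t ^ 2 := by nlinarith
  set SP := ∑ p : P, v (Sum.inl p) with hSP
  set SL := ∑ l : Lns, v (Sum.inr l) with hSL
  have hconstP : ∀ p : P, (t ^ 2 - (q : ℝ)) * v (Sum.inl p) = SP := by
    intro p
    have e1 : t * (t * v (Sum.inl p)) = (q : ℝ) * v (Sum.inl p) + SP := by
      rw [← hA1 p, Finset.mul_sum]
      have expand : ∀ l : Lns, t * (if p ∈ l then v (Sum.inr l) else 0)
          = (if p ∈ l then ∑ p' : P, (if p' ∈ l then v (Sum.inl p') else 0) else 0) := by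
        intro l
        by_cases hc : p ∈ l <;> simp [hc, hA2 l]
      simp_rw [expand]
      exact sumA p _
    linear_combination e1
  have hconstL : ∀ l : Lns, (t ^ 2 - (q : ℝ)) * v (Sum.inr l) = SL := by
    intro l
    have e1 : t * (t * v (Sum.inr l)) = (q : ℝ) * v (Sum.inr l) + SL := by
      rw [← hA2 l, Finset.mul_sum]
      have expand : ∀ p : P, t * (if p ∈ l then v (Sum.inl p) else 0)
          = (if p ∈ l then ∑ l' : Lns, (if p ∈ l' then v (Sum.inr l') else 0) else 0) := by
        intro p
        by_cases hc : p ∈ l <;> simp [hc, hA1 p]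
      simp_rw [expand]
      exact sumA' l _
    linear_combination e1
  have htq : t ^ 2 - (q : ℝ) ≠ 0 := by linarith
  set a := v (Sum.inl p₀) with hadef
  set b := v (Sum.inr l₀) with hbdef
  have hallP : ∀ p : P, v (Sum.inl p) = a := fun p =>
    mul_left_cancel₀ htq ((hconstP p).trans (hconstP p₀).symm)
  have hallL : ∀ l : Lns, v (Sum.inr l) = b := fun l =>
    mul_left_cancel₀ htq ((hconstL l).trans (hconstL l₀).symm)
  have hrel1 : ((q : ℝ) + 1) * b = t * a := by
    have e : ∑ l : Lns, (if p₀ ∈ l then v (Sum.inr l) else 0) = ((q : ℝ) + 1) * b := by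
      rw [← Finset.sum_filter, Finset.sum_congr rfl (fun l _ => hallL l), Finset.sum_const,
        card_lines_through, nsmul_eq_mul]
      push_cast; ring
    rw [← e, hA1 p₀, hallP p₀]
  have hrel2 : ((q : ℝ) + 1) * a = t * b := by
    have e : ∑ p : P, (if p ∈ l₀ then v (Sum.inl p) else 0) = ((q : ℝ) + 1) * a := by
      rw [← Finset.sum_filter, Finset.sum_congr rfl (fun p _ => hallP p), Finset.sum_const,
        card_points_on, nsmul_eq_mul]
      push_cast; ring
    rw [← e, hA2 l₀, hallL l₀]
  have hq1 : (0 : ℝ) < (q : ℝ) + 1 := by positivity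
  by_cases haz : a = 0
  · exfalso
    have hbz : b = 0 := by
      have : t * b = 0 := by rw [← hrel2, haz, mul_zero]
      exact (mul_eq_zero.mp this).resolve_left (ne_of_gt ht0)
    have hzero : ∀ w : P ⊕ Lns, v w = 0 := by
      intro w
      cases w with
      | inl p => rw [hallP p, haz]
      | inr l => rw [hallL l, hbz]
    have hnorm : ‖h.eigenvectorBasis i‖ = 1 := h.eigenvectorBasis.orthonormal.1 i
    rw [EuclideanSpace.norm_eq] at hnorm
    have : ∑ w : P ⊕ Lns, ‖h.eigenvectorBasis i w‖ ^ 2 = 0 := by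
      apply Finset.sum_eq_zero
      intro w _
      have : h.eigenvectorBasis i w = 0 := hzero w
      rw [this]; simp
    rw [this, Real.sqrt_zero] at hnorm
    exact one_ne_zero hnorm.symm
  · have hteq : t = (q : ℝ) + 1 := by
      have e : t * (t * a) = ((q : ℝ) + 1) * (((q : ℝ) + 1) * a) := by
        linear_combination (-t) * hrel1 - ((q : ℝ) + 1) * hrel2
      have e2 : (t - ((q : ℝ) + 1)) * ((t + ((q : ℝ) + 1)) * a) = 0 := by
        linear_combination e
      rcases mul_eq_zero.mp e2 with h' | h'
      · linarith
      · rcases mul_eq_zero.mp h' with h'' | h''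
        · linarith
        · exact absurd h'' haz
    have hab : a = b := by
      have : ((q : ℝ) + 1) * a = ((q : ℝ) + 1) * b := by rw [hrel2, hteq]
      exact mul_left_cancel₀ (ne_of_gt hq1) this
    refine ⟨a, haz, fun w => ?_⟩
    cases w with
    | inl p => exact hallP p
    | inr l => rw [hallL l, ← hab]

lemma sqrt_lt_succ : Real.sqrt (Configuration.ProjectivePlane.order P Lns)
    < (Configuration.ProjectivePlane.order P Lns : ℝ) + 1 := by
  obtain ⟨hs0, hs2⟩ := sqrt_facts (P := P) (Lns := Lns)
  nlinarith [Nat.cast_nonneg (α := ℝ) (Configuration.ProjectivePlane.order P Lns)]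

lemma one_neg (h : (shiftedMat P Lns).IsHermitian) :
    {i | h.eigenvalues i < 0}.ncard = 1 := by
  classical
  set q := Configuration.ProjectivePlane.order P Lns with hq
  set s := Real.sqrt q with hsdef
  obtain ⟨hs0, hs2⟩ := sqrt_facts (P := P) (Lns := Lns)
  have hP : Nonempty P := nonempty_point P Lns
  have hL : Nonempty Lns := nonempty_line P Lns
  have hslt : s < (q : ℝ) + 1 := sqrt_lt_succ (P := P) (Lns := Lns)
  have hne : ∃ i, h.eigenvalues i < 0 := by
    by_contra hc
    push_neg at hc
    have hpsd := h.posSemidef_iff_eigenvalues_nonneg.mpr hc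
    have hineq := hpsd.dotProduct_mulVec_nonneg (fun _ => (1 : ℝ))
    have hval : ∀ w : P ⊕ Lns, (shiftedMat P Lns *ᵥ (fun _ => (1 : ℝ))) w = s - ((q : ℝ) + 1) := by
      intro w
      cases w with
      | inl p =>
        rw [mulVec_inl]
        rw [← Finset.sum_filter, Finset.sum_const, card_lines_through, nsmul_eq_mul]
        push_cast; ring
      | inr l =>
        rw [mulVec_inr]
        rw [← Finset.sum_filter, Finset.sum_const, card_points_on, nsmul_eq_mul]
        push_cast; ring
    rw [dotProduct] at hineq
    simp only [Pi.star_apply, star_trivial, one_mul] at hineq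
    rw [Finset.sum_congr rfl (fun w _ => hval w), Finset.sum_const, nsmul_eq_mul] at hineq
    have hcard : (0 : ℝ) < (Finset.univ (α := P ⊕ Lns)).card := by
      have : 0 < Fintype.card (P ⊕ Lns) := Fintype.card_pos
      exact_mod_cast this
    nlinarith
  obtain ⟨i0, hi0⟩ := hne
  have huniq : ∀ j, h.eigenvalues j < 0 → j = i0 := by
    intro j hj
    by_contra hij
    obtain ⟨a, ha, hva⟩ := eigen_const h j hj
    obtain ⟨b, hb, hvb⟩ := eigen_const h i0 hi0
    have horth : (inner ℝ (h.eigenvectorBasis j) (h.eigenvectorBasis i0) : ℝ) = 0 :=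
      h.eigenvectorBasis.orthonormal.2 hij
    rw [PiLp.inner_apply] at horth
    simp only [RCLike.inner_apply, conj_trivial] at horth
    rw [Finset.sum_congr rfl (fun w _ => by rw [hva w, hvb w])] at horth
    rw [Finset.sum_const, nsmul_eq_mul] at horth
    have hcard : ((Finset.univ (α := P ⊕ Lns)).card : ℝ) ≠ 0 := by
      have : 0 < Fintype.card (P ⊕ Lns) := Fintype.card_pos
      exact_mod_cast ne_of_gt this
    have := mul_eq_zero.mp horth
    rcases this with h' | h'
    · exact hcard h'
    · rcases mul_eq_zero.mp h' with h'' | h''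
      · exact hb h''
      · exact ha h''
  have hset : {i | h.eigenvalues i < 0} = {i0} := by
    ext j
    simp only [Set.mem_setOf_eq, Set.mem_singleton_iff]
    exact ⟨fun hj => huniq j hj, fun hj => hj ▸ hi0⟩
  rw [hset, Set.ncard_singleton]

lemma edge_neg (u w : P ⊕ Lns) (huw : (incidenceGraph P Lns).Adj u w) :
    shiftedMat P Lns u w < 0 := by
  have hne : u ≠ w := huw.ne
  simp only [shiftedMat, Matrix.sub_apply, Matrix.smul_apply, Matrix.one_apply, adjMat,
    Matrix.of_apply, smul_eq_mul, hne, if_false, huw, if_true, mul_zero, zero_sub]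
  norm_num

lemma nonedge_zero (u w : P ⊕ Lns) (hne : u ≠ w) (huw : ¬ (incidenceGraph P Lns).Adj u w) :
    shiftedMat P Lns u w = 0 := by
  simp only [shiftedMat, Matrix.sub_apply, Matrix.smul_apply, Matrix.one_apply, adjMat,
    Matrix.of_apply, smul_eq_mul, hne, if_false, huw, mul_zero, zero_sub, neg_zero]

end Stmt10Aux

/-- for the incidence graph `H_q` of a projective plane of order `q`,
the matrix `M_q = √q·I − A_q` belongs to `M(H_q)` and has corank `q² + q`. -/
theorem stmt10 :
    CdVMatrix (incidenceGraph P Lns) (shiftedMat P Lns) ∧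
    Module.finrank ℝ (LinearMap.ker (shiftedMat P Lns).mulVecLin) =
      (Configuration.ProjectivePlane.order P Lns) ^ 2 +
        Configuration.ProjectivePlane.order P Lns := by
  exact ⟨⟨Stmt10Aux.herm, Stmt10Aux.edge_neg, Stmt10Aux.nonedge_zero,
    Stmt10Aux.one_neg Stmt10Aux.herm⟩, Stmt10Aux.finrank_ker_shifted⟩
end

section
/- Let G be a connected graph and M ∈ M(G) satisfying the Strong Arnold hypothesis. Then ker(M) is a semivalid representation of G; consequently μ(G) ≤ η(G). -/
open Matrix Set

variable {V : Type*} [Fintype V] [DecidableEq V]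

set_option linter.unusedSectionVars false
section Help
open Finset

section Spectral
variable {M : Matrix V V ℝ}

lemma symmBil (hH : M.IsHermitian) (a y : V → ℝ) : (M *ᵥ a) ⬝ᵥ y = a ⬝ᵥ (M *ᵥ y) := by
  have hs : Mᵀ = M := hH
  rw [dotProduct_mulVec, ← mulVec_transpose, hs, dotProduct_comm]

lemma dotProduct_sum' {ι : Type*} (y : V → ℝ) (s : Finset ι) (f : ι → V → ℝ) :
    y ⬝ᵥ (∑ i ∈ s, f i) = ∑ i ∈ s, y ⬝ᵥ f i := by
  simp only [dotProduct, Finset.sum_apply, Finset.mul_sum]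
  rw [Finset.sum_comm]

/-- eigenbasis as plain functions -/
noncomputable def evec (hH : M.IsHermitian) (i : V) : V → ℝ := ⇑(hH.eigenvectorBasis i)

lemma evec_dot (hH : M.IsHermitian) (i j : V) :
    evec hH i ⬝ᵥ evec hH j = if i = j then 1 else 0 := by
  have h := hH.eigenvectorBasis.orthonormal
  rw [orthonormal_iff_ite] at h
  have h2 := h i j
  rw [PiLp.inner_apply] at h2
  simpa [evec, dotProduct, mul_comm] using h2

lemma mulVec_apply' (x : V → ℝ) (v : V) : (M *ᵥ x) v = ∑ u, M v u * x u := by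
  simp [Matrix.mulVec, dotProduct]

lemma dot_mulVec_double (y z : V → ℝ) :
    y ⬝ᵥ (M *ᵥ z) = ∑ u, ∑ v, y u * M u v * z v := by
  simp only [dotProduct, mulVec_apply', Finset.mul_sum, mul_assoc]

lemma evec_mulVec (hH : M.IsHermitian) (i : V) :
    M *ᵥ evec hH i = hH.eigenvalues i • evec hH i :=
  hH.mulVec_eigenvectorBasis i

lemma evec_expand (hH : M.IsHermitian) (y : V → ℝ) :
    y = ∑ i, (evec hH i ⬝ᵥ y) • evec hH i := by
  have h := hH.eigenvectorBasis.sum_repr ((WithLp.equiv 2 (V → ℝ)).symm y)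
  have h2 : ∀ i, hH.eigenvectorBasis.repr ((WithLp.equiv 2 (V → ℝ)).symm y) i
      = evec hH i ⬝ᵥ y := by
    intro i
    rw [hH.eigenvectorBasis.repr_apply_apply, PiLp.inner_apply]
    simp only [RCLike.inner_apply, starRingEnd_apply, star_trivial]
    rw [dotProduct]; exact Finset.sum_congr rfl fun x _ => mul_comm _ _
  funext v
  have h3 := congrArg (fun f => (WithLp.ofLp f) v) h
  simp only [WithLp.ofLp_sum, Finset.sum_apply, WithLp.ofLp_smul, Pi.smul_apply] at h3
  simp only [h2] at h3
  rw [Finset.sum_apply]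
  exact h3.symm

/-- Parseval -/
lemma dot_expand (hH : M.IsHermitian) (y z : V → ℝ) :
    y ⬝ᵥ z = ∑ i, (evec hH i ⬝ᵥ y) * (evec hH i ⬝ᵥ z) := by
  conv_lhs => rw [evec_expand hH z]
  rw [dotProduct_sum']
  refine Finset.sum_congr rfl fun i _ => ?_
  rw [dotProduct_smul, smul_eq_mul, dotProduct_comm y (evec hH i)]
  ring

lemma evec_dot_mulVec (hH : M.IsHermitian) (i : V) (z : V → ℝ) :
    evec hH i ⬝ᵥ (M *ᵥ z) = hH.eigenvalues i * (evec hH i ⬝ᵥ z) := by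
  rw [← symmBil hH, evec_mulVec hH, smul_dotProduct, smul_eq_mul]

lemma dot_mulVec_expand (hH : M.IsHermitian) (y z : V → ℝ) :
    y ⬝ᵥ (M *ᵥ z) = ∑ i, hH.eigenvalues i * ((evec hH i ⬝ᵥ y) * (evec hH i ⬝ᵥ z)) := by
  rw [dot_expand hH y (M *ᵥ z)]
  refine Finset.sum_congr rfl fun i _ => ?_
  rw [evec_dot_mulVec hH]
  ring

lemma mulVec_expand (hH : M.IsHermitian) (y : V → ℝ) :
    M *ᵥ y = ∑ i, (hH.eigenvalues i * (evec hH i ⬝ᵥ y)) • evec hH i := by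
  conv_lhs => rw [evec_expand hH (M *ᵥ y)]
  refine Finset.sum_congr rfl fun i _ => ?_
  rw [evec_dot_mulVec hH]

end Spectral

section Perron
variable {G : SimpleGraph V} {M : Matrix V V ℝ}

lemma offdiag_nonpos (hM : CdVMatrix G M) {u v : V} (huv : u ≠ v) : M u v ≤ 0 := by
  by_cases h : G.Adj u v
  · exact le_of_lt (hM.edge_neg u v h)
  · exact le_of_eq (hM.nonedge_zero u v huv h)

/-- a nonempty set closed under adjacency in a connected graph is everything -/
lemma closed_eq_univ (hG : G.Connected) {S : Set V} (hne : S.Nonempty)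
    (hcl : ∀ u ∈ S, ∀ v, G.Adj u v → v ∈ S) : S = Set.univ := by
  obtain ⟨u₀, hu₀⟩ := hne
  ext v
  simp only [Set.mem_univ, iff_true]
  obtain ⟨w⟩ := hG.preconnected u₀ v
  clear * - hu₀ hcl w
  induction w with
  | nil => exact hu₀
  | cons h p ih => exact ih (hcl _ hu₀ _ h)

lemma exists_neg_eigen_index (hM : CdVMatrix G M) :
    ∃ i₀, hM.herm.eigenvalues i₀ < 0 ∧ ∀ i, i ≠ i₀ → 0 ≤ hM.herm.eigenvalues i := by
  obtain ⟨i₀, hi₀⟩ := Set.ncard_eq_one.mp hM.one_neg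
  refine ⟨i₀, ?_, fun i hi => ?_⟩
  · have : i₀ ∈ {i | hM.herm.eigenvalues i < 0} := hi₀ ▸ rfl
    exact this
  · by_contra h
    push_neg at h
    have : i ∈ {j | hM.herm.eigenvalues j < 0} := h
    rw [hi₀] at this
    exact hi this

/-- Perron package: positive ground state, orthogonal to the kernel, with the
quadratic form PSD on its orthogonal complement. -/
lemma perron_package (hG : G.Connected) (hM : CdVMatrix G M) :
    ∃ φ : V → ℝ, (∀ v, 0 < φ v) ∧ (∀ x, M *ᵥ x = 0 → φ ⬝ᵥ x = 0) ∧
      (∀ y, φ ⬝ᵥ y = 0 → 0 ≤ y ⬝ᵥ (M *ᵥ y) ∧ (y ⬝ᵥ (M *ᵥ y) = 0 → M *ᵥ y = 0)) := by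
  classical
  obtain ⟨i₀, hneg, hnn⟩ := exists_neg_eigen_index hM
  set hH := hM.herm
  set lam := hH.eigenvalues with hlam
  set ψ : V → ℝ := evec hH i₀ with hψ
  set φ : V → ℝ := fun v => |ψ v| with hφ
  -- basic facts
  have hψψ : ψ ⬝ᵥ ψ = 1 := by rw [evec_dot hH]; simp
  have hφφ : φ ⬝ᵥ φ = 1 := by
    rw [← hψψ]; unfold dotProduct
    exact Finset.sum_congr rfl fun v _ => by simp [hφ, abs_mul_abs_self]
  -- Rayleigh lower bound
  have hray : ∀ y : V → ℝ, lam i₀ * (y ⬝ᵥ y) ≤ y ⬝ᵥ (M *ᵥ y) := by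
    intro y
    rw [dot_mulVec_expand hH, dot_expand hH y y, Finset.mul_sum]
    refine Finset.sum_le_sum fun i _ => ?_
    rcases eq_or_ne i i₀ with rfl | hi
    · exact le_rfl
    · have h1 : 0 ≤ lam i := hnn i hi
      have h2 : lam i₀ < 0 := hneg
      nlinarith [mul_self_nonneg (evec hH i ⬝ᵥ y)]
  -- φᵀMφ ≤ ψᵀMψ = lam i₀
  have hψMψ : ψ ⬝ᵥ (M *ᵥ ψ) = lam i₀ := by
    rw [evec_mulVec hH i₀, dotProduct_smul, smul_eq_mul, hψψ]; ring
  have hcompare : φ ⬝ᵥ (M *ᵥ φ) ≤ ψ ⬝ᵥ (M *ᵥ ψ) := by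
    rw [dot_mulVec_double, dot_mulVec_double]
    refine Finset.sum_le_sum fun u _ => ?_
    refine Finset.sum_le_sum fun v _ => ?_
    rcases eq_or_ne u v with rfl | huv
    · refine le_of_eq ?_
      show |ψ u| * M u u * |ψ u| = ψ u * M u u * ψ u
      rw [mul_right_comm, mul_right_comm (ψ u) (M u u) (ψ u), abs_mul_abs_self]
    · have h1 : M u v ≤ 0 := offdiag_nonpos hM huv
      have h2 : ψ u * ψ v ≤ |ψ u| * |ψ v| := by
        rw [← abs_mul]; exact le_abs_self _
      simp only [hφ]
      nlinarith
  have heq : φ ⬝ᵥ (M *ᵥ φ) = lam i₀ := by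
    have := hray φ
    rw [hφφ, mul_one] at this
    rw [hψMψ] at hcompare
    linarith
  -- coefficients of φ vanish away from i₀
  have hcoef : ∀ i, i ≠ i₀ → evec hH i ⬝ᵥ φ = 0 := by
    intro i hi
    have hsum : ∑ i, (lam i - lam i₀) * (evec hH i ⬝ᵥ φ) ^ 2 = 0 := by
      have e1 : φ ⬝ᵥ (M *ᵥ φ) = ∑ i, lam i * (evec hH i ⬝ᵥ φ) ^ 2 := by
        rw [dot_mulVec_expand hH]
        exact Finset.sum_congr rfl fun i _ => by ring
      have e2 : (1 : ℝ) = ∑ i, (evec hH i ⬝ᵥ φ) ^ 2 := by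
        rw [← hφφ, dot_expand hH φ φ]
        exact Finset.sum_congr rfl fun i _ => by ring
      have : ∑ i, (lam i - lam i₀) * (evec hH i ⬝ᵥ φ) ^ 2
          = ∑ i, lam i * (evec hH i ⬝ᵥ φ) ^ 2 - lam i₀ * ∑ i, (evec hH i ⬝ᵥ φ) ^ 2 := by
        rw [Finset.mul_sum, ← Finset.sum_sub_distrib]
        exact Finset.sum_congr rfl fun i _ => by ring
      rw [this, ← e1, ← e2, heq]; ring
    have hnonneg : ∀ j ∈ Finset.univ, 0 ≤ (lam j - lam i₀) * (evec hH j ⬝ᵥ φ) ^ 2 := by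
      intro j _
      rcases eq_or_ne j i₀ with rfl | hj'
      · simp
      · have h0 : 0 ≤ lam j := hnn j hj'
        have h1 : (0:ℝ) ≤ lam j - lam i₀ := by linarith
        positivity
    have hterm := (Finset.sum_eq_zero_iff_of_nonneg hnonneg).mp hsum i (Finset.mem_univ i)
    rcases mul_eq_zero.mp hterm with h | h
    · exfalso
      have h0 : 0 ≤ lam i := hnn i hi
      linarith
    · exact pow_eq_zero_iff two_ne_zero |>.mp h
  -- φ is a multiple of the eigenvector ψ
  have hφ_expand : φ = (evec hH i₀ ⬝ᵥ φ) • evec hH i₀ := by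
    conv_lhs => rw [evec_expand hH φ]
    exact Finset.sum_eq_single i₀ (fun i _ hi => by rw [hcoef i hi, zero_smul])
      (fun h => absurd (Finset.mem_univ i₀) h)
  have hMφ : M *ᵥ φ = lam i₀ • φ := by
    conv_lhs => rw [hφ_expand]
    rw [mulVec_smul, evec_mulVec hH i₀, smul_comm]
    conv_rhs => rw [hφ_expand]
  -- positivity of φ
  have hφnonneg : ∀ v, 0 ≤ φ v := fun v => abs_nonneg _
  have hpos : ∀ v, 0 < φ v := by
    have hS : {v | 0 < φ v} = Set.univ := by
      refine closed_eq_univ hG ?_ ?_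
      · by_contra hne
        rw [Set.not_nonempty_iff_eq_empty] at hne
        have hz : φ = 0 := by
          funext v
          have h1 : v ∉ {v | 0 < φ v} := by rw [hne]; exact Set.notMem_empty v
          have h2 : ¬ 0 < φ v := h1
          show φ v = 0
          have := hφnonneg v
          linarith [not_lt.mp h2]
        rw [hz] at hφφ
        simp [dotProduct] at hφφ
      · intro u hu v huv
        by_contra hv
        have hφv : φ v = 0 := le_antisymm (not_lt.mp hv) (hφnonneg v)
        have h0 : ∑ u', M v u' * φ u' = 0 := by
          rw [← mulVec_apply', hMφ]
          simp only [Pi.smul_apply, smul_eq_mul, hφv, mul_zero]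
        have hterms : ∀ u' ∈ Finset.univ, M v u' * φ u' ≤ 0 := by
          intro u' _
          rcases eq_or_ne v u' with rfl | hne
          · rw [hφv]; simp
          · exact mul_nonpos_of_nonpos_of_nonneg (offdiag_nonpos hM hne) (hφnonneg u')
        have hall := (Finset.sum_eq_zero_iff_of_nonpos hterms).mp h0 u (Finset.mem_univ u)
        have hadj : G.Adj v u := huv.symm
        have : M v u < 0 := hM.edge_neg v u hadj
        have hu' : 0 < φ u := hu
        nlinarith
    intro v
    have : v ∈ {v | 0 < φ v} := by rw [hS]; trivial
    exact this
  -- orthogonality of kernel to φ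
  have horth : ∀ x, M *ᵥ x = 0 → φ ⬝ᵥ x = 0 := by
    intro x hx
    have h1 : lam i₀ * (φ ⬝ᵥ x) = 0 := by
      have : (M *ᵥ φ) ⬝ᵥ x = φ ⬝ᵥ (M *ᵥ x) := symmBil hH φ x
      rw [hMφ, smul_dotProduct, smul_eq_mul, hx, dotProduct_zero] at this
      exact this
    rcases mul_eq_zero.mp h1 with h | h
    · exact absurd h (ne_of_lt hneg)
    · exact h
  -- the PSD property on the orthogonal complement
  have hc₀ : evec hH i₀ ⬝ᵥ φ ≠ 0 := by
    intro h
    rw [h, zero_smul] at hφ_expand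
    obtain ⟨v⟩ := hG.nonempty
    have h2 := hpos v
    rw [hφ_expand] at h2
    simp at h2
  refine ⟨φ, hpos, horth, fun y hy => ?_⟩
  have hcy : evec hH i₀ ⬝ᵥ y = 0 := by
    have : φ ⬝ᵥ y = (evec hH i₀ ⬝ᵥ φ) * (evec hH i₀ ⬝ᵥ y) := by
      conv_lhs => rw [hφ_expand]
      rw [smul_dotProduct, smul_eq_mul]
    rw [hy] at this
    rcases mul_eq_zero.mp this.symm with h | h
    · exact absurd h hc₀
    · exact h
  have hterms : ∀ i ∈ Finset.univ, 0 ≤ lam i * ((evec hH i ⬝ᵥ y) * (evec hH i ⬝ᵥ y)) := by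
    intro i _
    rcases eq_or_ne i i₀ with rfl | hi
    · rw [hcy]; simp
    · have := hnn i hi
      nlinarith [mul_self_nonneg (evec hH i ⬝ᵥ y)]
  constructor
  · rw [dot_mulVec_expand hH]
    exact Finset.sum_nonneg hterms
  · intro h0
    rw [dot_mulVec_expand hH] at h0
    have hall := (Finset.sum_eq_zero_iff_of_nonneg hterms).mp h0
    rw [mulVec_expand hH y]
    refine Finset.sum_eq_zero fun i _ => ?_
    rcases eq_or_ne i i₀ with rfl | hi
    · rw [hcy]; simp
    · have hi' := hall i (Finset.mem_univ i)
      rcases mul_eq_zero.mp hi' with h | h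
      · have h' : hH.eigenvalues i = 0 := h
        rw [h', zero_mul, zero_smul]
      · have : evec hH i ⬝ᵥ y = 0 := by
          rcases mul_eq_zero.mp h with h' | h' <;> exact h'
        rw [this]; simp
end Perron

end Help


section CompTools
variable {G : SimpleGraph V}

/-- vertex set of a connected component of an induced subgraph -/
def cSet {S : Set V} (K : (G.induce S).ConnectedComponent) : Set V :=
  Subtype.val '' K.supp

lemma mem_cSet {S : Set V} {K : (G.induce S).ConnectedComponent} {v : V} :
    v ∈ cSet K ↔ ∃ h : v ∈ S, (G.induce S).connectedComponentMk ⟨v, h⟩ = K := by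
  constructor
  · rintro ⟨u, hu, rfl⟩
    exact ⟨u.prop, hu⟩
  · rintro ⟨h, hK⟩
    exact ⟨⟨v, h⟩, hK, rfl⟩

lemma cSet_subset {S : Set V} {K : (G.induce S).ConnectedComponent} : cSet K ⊆ S := by
  rintro v ⟨u, _, rfl⟩
  exact u.prop

lemma cSet_nonempty {S : Set V} (K : (G.induce S).ConnectedComponent) :
    (cSet K).Nonempty := by
  obtain ⟨u, hu⟩ := Quot.exists_rep K
  exact ⟨u.val, mem_cSet.mpr ⟨u.prop, hu⟩⟩

lemma mem_cSet_self {S : Set V} {v : V} (h : v ∈ S) :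
    v ∈ cSet ((G.induce S).connectedComponentMk ⟨v, h⟩) :=
  mem_cSet.mpr ⟨h, rfl⟩

lemma cSet_disjoint {S : Set V} {K K' : (G.induce S).ConnectedComponent}
    (hne : K ≠ K') {v : V} (h : v ∈ cSet K) (h' : v ∈ cSet K') : False := by
  obtain ⟨hv, hK⟩ := mem_cSet.mp h
  obtain ⟨hv', hK'⟩ := mem_cSet.mp h'
  exact hne (hK ▸ hK' ▸ rfl)

lemma adj_mem_cSet {S : Set V} {K : (G.induce S).ConnectedComponent} {u v : V}
    (hu : u ∈ cSet K) (hv : v ∈ S) (h : G.Adj u v) : v ∈ cSet K := by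
  obtain ⟨hu', hK⟩ := mem_cSet.mp hu
  refine mem_cSet.mpr ⟨hv, ?_⟩
  rw [← hK]
  have hadj : (G.induce S).Adj ⟨v, hv⟩ ⟨u, hu'⟩ := h.symm
  exact SimpleGraph.ConnectedComponent.sound hadj.reachable

lemma not_adj_of_ne_comp {S : Set V} {K K' : (G.induce S).ConnectedComponent}
    (hne : K ≠ K') {u v : V} (hu : u ∈ cSet K) (hv : v ∈ cSet K') :
    ¬ G.Adj u v ∧ u ≠ v := by
  constructor
  · intro hadj
    exact cSet_disjoint hne (adj_mem_cSet hu (cSet_subset hv) hadj) hv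
  · rintro rfl
    exact cSet_disjoint hne hu hv

lemma cSet_entry_zero {M : Matrix V V ℝ} (hM : CdVMatrix G M)
    {S : Set V} {K K' : (G.induce S).ConnectedComponent}
    (hne : K ≠ K') {u v : V} (hu : u ∈ cSet K) (hv : v ∈ cSet K') : M u v = 0 := by
  obtain ⟨hnadj, hne'⟩ := not_adj_of_ne_comp hne hu hv
  exact hM.nonedge_zero u v hne' hnadj

/-- descend a walk in an induced subgraph to a sub-induced subgraph closed under steps -/
lemma walk_descend {A T : Set V} (hstep : ∀ u v, u ∈ A → v ∈ T → G.Adj u v → v ∈ A)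
    {a b : ↥T} (w : (G.induce T).Walk a b) (ha : a.val ∈ A) :
    ∃ hb : b.val ∈ A, (G.induce A).Reachable ⟨a.val, ha⟩ ⟨b.val, hb⟩ := by
  induction w with
  | nil => exact ⟨ha, SimpleGraph.Reachable.refl _⟩
  | @cons a c b h p ih =>
    have hadj : G.Adj a.val c.val := h
    have hc : c.val ∈ A := hstep a.val c.val ha c.prop hadj
    obtain ⟨hb, hr⟩ := ih hc
    have hadj' : (G.induce A).Adj ⟨a.val, ha⟩ ⟨c.val, hc⟩ := hadj
    exact ⟨hb, hadj'.reachable.trans hr⟩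

lemma reach_mono {A T : Set V} (hAT : A ⊆ T) {a b : ↥A}
    (h : (G.induce A).Reachable a b) :
    (G.induce T).Reachable ⟨a.val, hAT a.prop⟩ ⟨b.val, hAT b.prop⟩ := by
  exact h.map (⟨fun p => ⟨p.val, hAT p.prop⟩, fun {p q} h => h⟩ :
    G.induce A →g G.induce T)

end CompTools



section Analytic
variable {G : SimpleGraph V} {M : Matrix V V ℝ}

/-- component vector: x restricted to a component -/
noncomputable def cVec (x : V → ℝ) {S : Set V} (K : (G.induce S).ConnectedComponent) :
    V → ℝ := (cSet K).indicator x

lemma cVec_of_mem {x : V → ℝ} {S : Set V} {K : (G.induce S).ConnectedComponent}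
    {v : V} (h : v ∈ cSet K) : cVec x K v = x v := Set.indicator_of_mem h x

lemma cVec_of_not_mem {x : V → ℝ} {S : Set V} {K : (G.induce S).ConnectedComponent}
    {v : V} (h : v ∉ cSet K) : cVec x K v = 0 := Set.indicator_of_notMem h x

lemma cVec_ne_zero {x : V → ℝ} {S : Set V} {K : (G.induce S).ConnectedComponent}
    {v : V} (h : cVec x K v ≠ 0) : v ∈ cSet K ∧ x v ≠ 0 := by
  by_cases hm : v ∈ cSet K
  · rw [cVec_of_mem hm] at h; exact ⟨hm, h⟩
  · rw [cVec_of_not_mem hm] at h; exact absurd rfl h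

lemma dot_vanish (y z : V → ℝ) (h : ∀ u v, y u ≠ 0 → z v ≠ 0 → M u v = 0) :
    y ⬝ᵥ (M *ᵥ z) = 0 := by
  rw [dot_mulVec_double]
  refine Finset.sum_eq_zero fun u _ => Finset.sum_eq_zero fun v _ => ?_
  by_cases hy : y u = 0
  · rw [hy]; ring
  by_cases hz : z v = 0
  · rw [hz]; ring
  rw [h u v hy hz]; ring

lemma q_eq {x : V → ℝ} (hx : M *ᵥ x = 0) (y : V → ℝ) :
    y ⬝ᵥ (M *ᵥ y) = -(y ⬝ᵥ (M *ᵥ (x - y))) := by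
  have h : y ⬝ᵥ (M *ᵥ x) = 0 := by rw [hx, dotProduct_zero]
  rw [Matrix.mulVec_sub, dotProduct_sub, h]; ring

lemma entry_zero_outside (hM : CdVMatrix G M) {S : Set V}
    {K : (G.induce S).ConnectedComponent} {u v : V}
    (hu : u ∈ cSet K) (hv : v ∈ S) (hv' : v ∉ cSet K) : M u v = 0 := by
  have hne : u ≠ v := by rintro rfl; exact hv' hu
  refine hM.nonedge_zero u v hne fun hadj => hv' (adj_mem_cSet hu hv hadj)

lemma q_suppComp (hM : CdVMatrix G M) {x : V → ℝ} (hx : M *ᵥ x = 0)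
    (K : (G.induce (supp x)).ConnectedComponent) :
    cVec x K ⬝ᵥ (M *ᵥ cVec x K) = 0 := by
  rw [q_eq hx, neg_eq_zero]
  refine dot_vanish _ _ fun u v hyu hzv => ?_
  obtain ⟨hu, _⟩ := cVec_ne_zero hyu
  have hv' : v ∉ cSet K := by
    intro hm
    rw [Pi.sub_apply, cVec_of_mem hm, sub_self] at hzv
    exact hzv rfl
  have hv : v ∈ supp x := by
    rw [Pi.sub_apply, cVec_of_not_mem hv', sub_zero] at hzv
    exact hzv
  exact entry_zero_outside hM hu hv hv'

lemma cross_zero (hM : CdVMatrix G M) (x : V → ℝ) {S : Set V}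
    {K K' : (G.induce S).ConnectedComponent} (hne : K ≠ K') :
    cVec x K ⬝ᵥ (M *ᵥ cVec x K') = 0 := by
  refine dot_vanish _ _ fun u v hyu hzv => ?_
  exact cSet_entry_zero hM hne (cVec_ne_zero hyu).1 (cVec_ne_zero hzv).1

/-- sign set -/
def Aset (x : V → ℝ) (ε : ℝ) : Set V := {v | 0 < ε * x v}

lemma Aset_subset_supp {x : V → ℝ} {ε : ℝ} : Aset x ε ⊆ supp x := by
  intro v hv
  intro h
  have : (0:ℝ) < ε * x v := hv
  rw [h, mul_zero] at this
  exact lt_irrefl 0 this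

lemma mem_Aset_or {x : V → ℝ} {ε : ℝ} (hε : ε = 1 ∨ ε = -1) {v : V}
    (h : x v ≠ 0) : v ∈ Aset x ε ∨ v ∈ Aset x (-ε) := by
  rcases hε with rfl | rfl <;>
  · rcases lt_or_gt_of_ne h with h' | h'
    · first
      | exact Or.inr (by show (0:ℝ) < _ * x v; linarith)
      | exact Or.inl (by show (0:ℝ) < _ * x v; linarith)
    · first
      | exact Or.inl (by show (0:ℝ) < _ * x v; linarith)
      | exact Or.inr (by show (0:ℝ) < _ * x v; linarith)

lemma Aset_disj {x : V → ℝ} {ε : ℝ} {v : V}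
    (h : v ∈ Aset x ε) (h' : v ∈ Aset x (-ε)) : False := by
  have h1 : (0:ℝ) < ε * x v := h
  have h2 : (0:ℝ) < -ε * x v := h'
  nlinarith

lemma q_signComp (hM : CdVMatrix G M) {x : V → ℝ} (hx : M *ᵥ x = 0)
    {ε : ℝ} (hε : ε = 1 ∨ ε = -1) (K : (G.induce (Aset x ε)).ConnectedComponent) :
    cVec x K ⬝ᵥ (M *ᵥ cVec x K) ≤ 0 ∧
    (cVec x K ⬝ᵥ (M *ᵥ cVec x K) = 0 →
      ∀ u ∈ cSet K, ∀ v ∈ Aset x (-ε), ¬ G.Adj u v) := by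
  set y := cVec x K with hy
  set z := x - y with hz
  have hterm : ∀ u v : V, (y u ≠ 0 ∧ z v ≠ 0) →
      (u ∈ cSet K ∧ v ∉ cSet K ∧ x v ≠ 0 ∧ y u = x u ∧ z v = x v) := by
    rintro u v ⟨hyu, hzv⟩
    obtain ⟨hu, _⟩ := cVec_ne_zero hyu
    have hv' : v ∉ cSet K := by
      intro hm
      rw [hz, Pi.sub_apply, hy, cVec_of_mem hm, sub_self] at hzv
      exact hzv rfl
    have hzv' : z v = x v := by
      rw [hz, Pi.sub_apply, hy, cVec_of_not_mem hv', sub_zero]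
    refine ⟨hu, hv', ?_, cVec_of_mem hu, hzv'⟩
    rw [← hzv']; exact hzv
  have hnn : ∀ u v : V, 0 ≤ y u * M u v * z v := by
    intro u v
    by_cases hyu : y u = 0
    · rw [hyu]; simp
    by_cases hzv : z v = 0
    · rw [hzv]; simp
    obtain ⟨hu, hv', hxv, hyx, hzx⟩ := hterm u v ⟨hyu, hzv⟩
    rcases mem_Aset_or hε hxv with hvA | hvB
    · rw [entry_zero_outside hM hu hvA hv']; simp
    · have huA : u ∈ Aset x ε := cSet_subset hu
      have hne : u ≠ v := by rintro rfl; exact Aset_disj huA hvB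
      have hMuv : M u v ≤ 0 := offdiag_nonpos hM hne
      have h1 : (0:ℝ) < ε * x u := huA
      have h2 : (0:ℝ) < -ε * x v := hvB
      rw [hyx, hzx]
      have hxv' : ε * x v < 0 := by nlinarith
      have hε2 : ε * ε = 1 := by rcases hε with rfl | rfl <;> norm_num
      have t1 : 0 ≤ M u v * (ε * x v) := by nlinarith
      have key : 0 ≤ (ε * x u) * (M u v * (ε * x v)) := mul_nonneg (le_of_lt h1) t1
      have hrw : (ε * x u) * (M u v * (ε * x v)) = (ε * ε) * (x u * M u v * x v) := by ring
      rw [hrw, hε2, one_mul] at key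
      exact key
  have hqe : y ⬝ᵥ (M *ᵥ y) = -(∑ u, ∑ v, y u * M u v * z v) := by
    rw [q_eq hx y, dot_mulVec_double]
  constructor
  · rw [hqe, neg_nonpos]
    exact Finset.sum_nonneg fun u _ => Finset.sum_nonneg fun v _ => hnn u v
  · intro hq0 u hu v hv hadj
    rw [hqe, neg_eq_zero] at hq0
    have hall := (Finset.sum_eq_zero_iff_of_nonneg
      (fun u _ => Finset.sum_nonneg fun v _ => hnn u v)).mp hq0 u (Finset.mem_univ u)
    have hall2 := (Finset.sum_eq_zero_iff_of_nonneg
      (fun v _ => hnn u v)).mp hall v (Finset.mem_univ v)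
    -- but the term is nonzero
    have huA : u ∈ Aset x ε := cSet_subset hu
    have hxu : x u ≠ 0 := Aset_subset_supp huA
    have hxv : x v ≠ 0 := Aset_subset_supp hv
    have hv' : v ∉ cSet K := fun hm => Aset_disj (cSet_subset hm) hv
    have hyu : y u = x u := cVec_of_mem hu
    have hzv : z v = x v := by
      rw [hz, Pi.sub_apply, hy, cVec_of_not_mem hv', sub_zero]
    have hMuv : M u v < 0 := hM.edge_neg u v hadj
    rw [hyu, hzv] at hall2
    exact (mul_ne_zero (mul_ne_zero hxu (ne_of_lt hMuv)) hxv) hall2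

lemma phi_dot_pos {φ x : V → ℝ} (hφpos : ∀ v, 0 < φ v) {ε : ℝ}
    {S : Set V} (K : (G.induce S).ConnectedComponent)
    (hsub : cSet K ⊆ Aset x ε) : 0 < ε * (φ ⬝ᵥ cVec x K) := by
  rw [dotProduct, Finset.mul_sum]
  obtain ⟨v₀, hv₀⟩ := cSet_nonempty K
  refine Finset.sum_pos' (fun v _ => ?_) ⟨v₀, Finset.mem_univ v₀, ?_⟩
  · by_cases hm : v ∈ cSet K
    · rw [cVec_of_mem hm]
      have h1 : (0:ℝ) < ε * x v := hsub hm
      have h2 : 0 < φ v := hφpos v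
      nlinarith
    · rw [cVec_of_not_mem hm]; simp
  · rw [cVec_of_mem hv₀]
    have h1 : (0:ℝ) < ε * x v₀ := hsub hv₀
    have h2 : 0 < φ v₀ := hφpos v₀
    nlinarith

/-- two vectors with nonpositive energy, zero cross terms, both non-orthogonal to φ,
combine into a kernel vector -/
lemma pair_kernel {φ : V → ℝ}
    (hA : ∀ y, φ ⬝ᵥ y = 0 → 0 ≤ y ⬝ᵥ (M *ᵥ y) ∧ (y ⬝ᵥ (M *ᵥ y) = 0 → M *ᵥ y = 0))
    (hH : M.IsHermitian) (y z : V → ℝ)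
    (hqy : y ⬝ᵥ (M *ᵥ y) ≤ 0) (hqz : z ⬝ᵥ (M *ᵥ z) ≤ 0)
    (hcross : y ⬝ᵥ (M *ᵥ z) = 0) :
    M *ᵥ ((φ ⬝ᵥ z) • y - (φ ⬝ᵥ y) • z) = 0 ∧
    (φ ⬝ᵥ z) ^ 2 * (y ⬝ᵥ (M *ᵥ y)) = 0 ∧ (φ ⬝ᵥ y) ^ 2 * (z ⬝ᵥ (M *ᵥ z)) = 0 := by
  set a := φ ⬝ᵥ z with hadef
  set b := φ ⬝ᵥ y with hbdef
  set w := a • y - b • z with hw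
  have hφw : φ ⬝ᵥ w = 0 := by
    rw [hw, dotProduct_sub, dotProduct_smul, dotProduct_smul, smul_eq_mul, smul_eq_mul,
      ← hadef, ← hbdef]
    ring
  have hcross' : z ⬝ᵥ (M *ᵥ y) = 0 := by
    rw [← symmBil hH, dotProduct_comm, hcross]
  have hexp : w ⬝ᵥ (M *ᵥ w) = a ^ 2 * (y ⬝ᵥ (M *ᵥ y)) + b ^ 2 * (z ⬝ᵥ (M *ᵥ z)) := by
    simp only [hw, Matrix.mulVec_sub, Matrix.mulVec_smul, dotProduct_sub, sub_dotProduct,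
      smul_dotProduct, dotProduct_smul, smul_eq_mul]
    rw [hcross, hcross']
    ring
  have hq : w ⬝ᵥ (M *ᵥ w) ≤ 0 := by
    rw [hexp]
    nlinarith [sq_nonneg a, sq_nonneg b]
  obtain ⟨hge, heq⟩ := hA w hφw
  have hq0 : w ⬝ᵥ (M *ᵥ w) = 0 := le_antisymm hq hge
  have hker := heq hq0
  rw [hexp] at hq0
  have h1 : a ^ 2 * (y ⬝ᵥ (M *ᵥ y)) ≤ 0 := by nlinarith [sq_nonneg a]
  have h2 : b ^ 2 * (z ⬝ᵥ (M *ᵥ z)) ≤ 0 := by nlinarith [sq_nonneg b]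
  exact ⟨hker, by linarith, by linarith⟩

end Analytic



section Stage2
variable {G : SimpleGraph V} {M : Matrix V V ℝ}

lemma exists_ne_zero_fun {w : V → ℝ} (h : w ≠ 0) : ∃ u, w u ≠ 0 := by
  by_contra hc
  push_neg at hc
  exact h (funext hc)

/-- two kernel vectors with separated supports contradict SAH -/
lemma sah_contra (hSAH : SAH G M) (w₁ w₂ : V → ℝ)
    (h1 : M *ᵥ w₁ = 0) (h2 : M *ᵥ w₂ = 0)
    (hsep : ∀ u v, w₁ u ≠ 0 → w₂ v ≠ 0 → ¬ G.Adj u v ∧ u ≠ v)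
    (hne1 : w₁ ≠ 0) (hne2 : w₂ ≠ 0) : False := by
  set X : Matrix V V ℝ := Matrix.of fun u v => w₁ u * w₂ v + w₂ u * w₁ v with hXdef
  have hXapp : ∀ u v, X u v = w₁ u * w₂ v + w₂ u * w₁ v := fun u v => rfl
  have hXsymm : X.IsSymm := by
    unfold Matrix.IsSymm
    ext u v
    rw [Matrix.transpose_apply, hXapp, hXapp]
    ring
  have hfirst : ∀ u v, (u = v ∨ G.Adj u v) → w₁ u * w₂ v = 0 := by
    intro u v h
    by_contra hc
    obtain ⟨hcu, hcv⟩ := mul_ne_zero_iff.mp hc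
    obtain ⟨hnadj, hnev⟩ := hsep u v hcu hcv
    rcases h with rfl | hadj
    · exact hnev rfl
    · exact hnadj hadj
  have hXzero : ∀ u v, (u = v ∨ G.Adj u v) → X u v = 0 := by
    intro u v h
    rw [hXapp, hfirst u v h]
    have h' : (v = u ∨ G.Adj v u) := by
      rcases h with rfl | hadj
      · exact Or.inl rfl
      · exact Or.inr hadj.symm
    rw [mul_comm, hfirst v u h']
    ring
  have hMX : M * X = 0 := by
    ext u v
    rw [Matrix.mul_apply, Matrix.zero_apply]
    have hre : ∀ k, M u k * X k v
        = (M u k * w₁ k) * w₂ v + (M u k * w₂ k) * w₁ v := by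
      intro k
      rw [hXapp]
      ring
    rw [Finset.sum_congr rfl (fun k _ => hre k), Finset.sum_add_distrib,
      ← Finset.sum_mul, ← Finset.sum_mul, ← mulVec_apply', ← mulVec_apply', h1, h2]
    simp
  have hX0 := hSAH X hXsymm hXzero hMX
  obtain ⟨u₀, hu₀⟩ := exists_ne_zero_fun hne1
  obtain ⟨v₀, hv₀⟩ := exists_ne_zero_fun hne2
  have hw₂u₀ : w₂ u₀ = 0 := by
    by_contra hc
    exact (hsep u₀ u₀ hu₀ hc).2 rfl
  have := congrFun (congrFun hX0 u₀) v₀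
  rw [hXapp, hw₂u₀, Matrix.zero_apply] at this
  simp only [zero_mul, add_zero] at this
  exact (mul_ne_zero hu₀ hv₀) this

lemma Aset_neg_neg (x : V → ℝ) : Aset x (-(-1 : ℝ)) = Aset x 1 := by norm_num

lemma step_closed {x : V → ℝ}
    (hnoedge : ∀ u ∈ Aset x 1, ∀ v ∈ Aset x (-1), ¬ G.Adj u v)
    {ε : ℝ} (hε : ε = 1 ∨ ε = -1) :
    ∀ u v, u ∈ Aset x ε → v ∈ supp x → G.Adj u v → v ∈ Aset x ε := by
  intro u v hu hv hadj
  rcases mem_Aset_or hε hv with h | h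
  · exact h
  exfalso
  rcases hε with rfl | rfl
  · exact hnoedge u hu v h hadj
  · rw [Aset_neg_neg] at h
    exact hnoedge v h u hu hadj.symm

lemma suppComp_sign {x : V → ℝ}
    (hnoedge : ∀ u ∈ Aset x 1, ∀ v ∈ Aset x (-1), ¬ G.Adj u v)
    (K : (G.induce (supp x)).ConnectedComponent) :
    ∃ ε : ℝ, (ε = 1 ∨ ε = -1) ∧ cSet K ⊆ Aset x ε := by
  obtain ⟨r, hr⟩ := cSet_nonempty K
  obtain ⟨hrS, hrK⟩ := mem_cSet.mp hr
  have hxr : x r ≠ 0 := hrS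
  have h1 : (1 : ℝ) = 1 ∨ (1 : ℝ) = -1 := Or.inl rfl
  rcases mem_Aset_or h1 hxr with hrA | hrA
  · refine ⟨1, Or.inl rfl, fun v hv => ?_⟩
    obtain ⟨hvS, hvK⟩ := mem_cSet.mp hv
    have hreach : (G.induce (supp x)).Reachable ⟨r, hrS⟩ ⟨v, hvS⟩ :=
      SimpleGraph.ConnectedComponent.exact (hrK.trans hvK.symm)
    obtain ⟨w⟩ := hreach
    exact (walk_descend (step_closed hnoedge (Or.inl rfl)) w hrA).1
  · refine ⟨-1, Or.inr rfl, fun v hv => ?_⟩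
    obtain ⟨hvS, hvK⟩ := mem_cSet.mp hv
    have hreach : (G.induce (supp x)).Reachable ⟨r, hrS⟩ ⟨v, hvS⟩ :=
      SimpleGraph.ConnectedComponent.exact (hrK.trans hvK.symm)
    obtain ⟨w⟩ := hreach
    exact (walk_descend (step_closed hnoedge (Or.inr rfl)) w hrA).1

lemma distinct_comps_of_not_connected {S : Set V} (hne : S.Nonempty)
    (hdisc : ¬ (G.induce S).Connected) :
    ∃ K K' : (G.induce S).ConnectedComponent, K ≠ K' := by
  have hne' : Nonempty ↥S := hne.to_subtype
  rw [SimpleGraph.connected_iff] at hdisc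
  push_neg at hdisc
  have hpre : ¬ (G.induce S).Preconnected := fun hp => (hdisc hp).elim hne'.some
  simp only [SimpleGraph.Preconnected, not_forall] at hpre
  obtain ⟨a, b, hnr⟩ := hpre
  refine ⟨(G.induce S).connectedComponentMk a, (G.induce S).connectedComponentMk b, ?_⟩
  intro h
  exact hnr (SimpleGraph.ConnectedComponent.exact h)

/-- stage 1: if the positive part (w.r.t. sign ε) is disconnected, there are
no edges between the two sign classes -/
lemma noedge_of_disc {φ x : V → ℝ}
    (hM : CdVMatrix G M)
    (hφpos : ∀ v, 0 < φ v)
    (hA : ∀ y, φ ⬝ᵥ y = 0 → 0 ≤ y ⬝ᵥ (M *ᵥ y) ∧ (y ⬝ᵥ (M *ᵥ y) = 0 → M *ᵥ y = 0))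
    (hx : M *ᵥ x = 0)
    {ε : ℝ} (hε : ε = 1 ∨ ε = -1)
    (hne : (Aset x ε).Nonempty) (hdisc : ¬ (G.induce (Aset x ε)).Connected) :
    ∀ u ∈ Aset x ε, ∀ v ∈ Aset x (-ε), ¬ G.Adj u v := by
  obtain ⟨K₁, K₂, hK12⟩ := distinct_comps_of_not_connected hne hdisc
  intro u hu v hv hadj
  set K := (G.induce (Aset x ε)).connectedComponentMk ⟨u, hu⟩ with hKdef
  obtain ⟨K', hKK'⟩ : ∃ K' : (G.induce (Aset x ε)).ConnectedComponent, K ≠ K' := by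
    by_cases h : K = K₁
    · exact ⟨K₂, h ▸ hK12⟩
    · exact ⟨K₁, h⟩
  have hq := (q_signComp hM hx hε K).1
  have hq' := (q_signComp hM hx hε K').1
  have hcross := cross_zero hM x hKK'
  obtain ⟨_, haq, _⟩ := pair_kernel hA hM.herm (cVec x K) (cVec x K') hq hq' hcross
  have hane : φ ⬝ᵥ cVec x K' ≠ 0 := by
    have := phi_dot_pos (x := x) (ε := ε) hφpos K' cSet_subset
    intro h
    rw [h, mul_zero] at this
    exact lt_irrefl 0 this
  have hq0 : cVec x K ⬝ᵥ (M *ᵥ cVec x K) = 0 := by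
    have h2 := pow_ne_zero 2 hane
    rcases mul_eq_zero.mp haq with h | h
    · exact absurd h h2
    · exact h
  exact (q_signComp hM hx hε K).2 hq0 u (mem_cSet_self hu) v hv hadj

end Stage2



section Stage3
variable {G : SimpleGraph V} {M : Matrix V V ℝ}

/-- kernel pair vector for two distinct components of a sign class -/
lemma sign_pair_w {φ x : V → ℝ} (hM : CdVMatrix G M) (hφpos : ∀ v, 0 < φ v)
    (hA : ∀ y, φ ⬝ᵥ y = 0 → 0 ≤ y ⬝ᵥ (M *ᵥ y) ∧ (y ⬝ᵥ (M *ᵥ y) = 0 → M *ᵥ y = 0))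
    (hx : M *ᵥ x = 0) {ε : ℝ} (hε : ε = 1 ∨ ε = -1)
    {K K' : (G.induce (Aset x ε)).ConnectedComponent} (hne : K ≠ K') :
    ∃ w : V → ℝ, M *ᵥ w = 0 ∧ w ≠ 0 ∧ ∀ v, w v ≠ 0 → v ∈ Aset x ε := by
  have hq := (q_signComp hM hx hε K).1
  have hq' := (q_signComp hM hx hε K').1
  have hcross := cross_zero hM x hne
  obtain ⟨hker, _, _⟩ := pair_kernel hA hM.herm (cVec x K) (cVec x K') hq hq' hcross
  set a := φ ⬝ᵥ cVec x K' with ha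
  set b := φ ⬝ᵥ cVec x K with hb
  have hane : a ≠ 0 := by
    have := phi_dot_pos (x := x) (ε := ε) hφpos K' cSet_subset
    intro h; rw [← ha, h, mul_zero] at this; exact lt_irrefl 0 this
  refine ⟨a • cVec x K - b • cVec x K', hker, ?_, ?_⟩
  · obtain ⟨v₀, hv₀⟩ := cSet_nonempty K
    intro h0
    have hv : (a • cVec x K - b • cVec x K') v₀ = 0 := by rw [h0]; rfl
    rw [Pi.sub_apply, Pi.smul_apply, Pi.smul_apply, cVec_of_mem hv₀,
      cVec_of_not_mem (fun hm => cSet_disjoint hne hv₀ hm), smul_eq_mul, smul_eq_mul,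
      mul_zero, sub_zero] at hv
    have hxv₀ : x v₀ ≠ 0 := Aset_subset_supp (cSet_subset hv₀)
    exact (mul_ne_zero hane hxv₀) hv
  · intro v hv
    by_contra hvA
    have h1 : cVec x K v = 0 := cVec_of_not_mem (fun hm => hvA (cSet_subset hm))
    have h2 : cVec x K' v = 0 := cVec_of_not_mem (fun hm => hvA (cSet_subset hm))
    rw [Pi.sub_apply, Pi.smul_apply, Pi.smul_apply, h1, h2] at hv
    simp at hv

/-- kernel pair vector for two distinct components of the support -/
lemma supp_pair_w {φ x : V → ℝ} (hM : CdVMatrix G M) (hφpos : ∀ v, 0 < φ v)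
    (hA : ∀ y, φ ⬝ᵥ y = 0 → 0 ≤ y ⬝ᵥ (M *ᵥ y) ∧ (y ⬝ᵥ (M *ᵥ y) = 0 → M *ᵥ y = 0))
    (hx : M *ᵥ x = 0)
    (hnoedge : ∀ u ∈ Aset x 1, ∀ v ∈ Aset x (-1), ¬ G.Adj u v)
    {K K' : (G.induce (supp x)).ConnectedComponent} (hne : K ≠ K') :
    ∃ w : V → ℝ, M *ᵥ w = 0 ∧ w ≠ 0 ∧ (∀ v, w v ≠ 0 → v ∈ cSet K ∪ cSet K') ∧
      (∃ a : ℝ, a ≠ 0 ∧ ∀ v ∈ cSet K, w v = a * x v) ∧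
      (∃ b : ℝ, b ≠ 0 ∧ ∀ v ∈ cSet K', w v = b * x v) := by
  have hq : cVec x K ⬝ᵥ (M *ᵥ cVec x K) ≤ 0 := le_of_eq (q_suppComp hM hx K)
  have hq' : cVec x K' ⬝ᵥ (M *ᵥ cVec x K') ≤ 0 := le_of_eq (q_suppComp hM hx K')
  have hcross := cross_zero hM x hne
  obtain ⟨hker, _, _⟩ := pair_kernel hA hM.herm (cVec x K) (cVec x K') hq hq' hcross
  set a := φ ⬝ᵥ cVec x K' with ha
  set b := φ ⬝ᵥ cVec x K with hb
  obtain ⟨ε', hε', hsub'⟩ := suppComp_sign hnoedge K'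
  obtain ⟨ε, hε, hsub⟩ := suppComp_sign hnoedge K
  have hane : a ≠ 0 := by
    have := phi_dot_pos (x := x) hφpos K' hsub'
    intro h; rw [← ha, h, mul_zero] at this; exact lt_irrefl 0 this
  have hbne : b ≠ 0 := by
    have := phi_dot_pos (x := x) hφpos K hsub
    intro h; rw [← hb, h, mul_zero] at this; exact lt_irrefl 0 this
  have hvalK : ∀ v ∈ cSet K, (a • cVec x K - b • cVec x K') v = a * x v := by
    intro v hv
    rw [Pi.sub_apply, Pi.smul_apply, Pi.smul_apply, cVec_of_mem hv,
      cVec_of_not_mem (fun hm => cSet_disjoint hne hv hm), smul_eq_mul, smul_eq_mul,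
      mul_zero, sub_zero]
  have hvalK' : ∀ v ∈ cSet K', (a • cVec x K - b • cVec x K') v = (-b) * x v := by
    intro v hv
    rw [Pi.sub_apply, Pi.smul_apply, Pi.smul_apply, cVec_of_mem hv,
      cVec_of_not_mem (fun hm => cSet_disjoint hne hm hv), smul_eq_mul, smul_eq_mul,
      mul_zero, zero_sub, neg_mul]
  refine ⟨a • cVec x K - b • cVec x K', hker, ?_, ?_, ⟨a, hane, hvalK⟩, ⟨-b, neg_ne_zero.mpr hbne, hvalK'⟩⟩
  · obtain ⟨v₀, hv₀⟩ := cSet_nonempty K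
    intro h0
    have hv : (a • cVec x K - b • cVec x K') v₀ = 0 := by rw [h0]; rfl
    rw [hvalK v₀ hv₀] at hv
    have hxv₀ : x v₀ ≠ 0 := cSet_subset hv₀
    exact (mul_ne_zero hane hxv₀) hv
  · intro v hv
    by_contra hvm
    rw [Set.mem_union] at hvm
    push_neg at hvm
    have h1 : cVec x K v = 0 := cVec_of_not_mem hvm.1
    have h2 : cVec x K' v = 0 := cVec_of_not_mem hvm.2
    rw [Pi.sub_apply, Pi.smul_apply, Pi.smul_apply, h1, h2] at hv
    simp at hv

/-- the support component of a vertex -/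
noncomputable def scomp {x : V → ℝ} {ε : ℝ} (hε : ε = 1 ∨ ε = -1) {u : V}
    (hu : u ∈ Aset x ε) (G : SimpleGraph V) : (G.induce (supp x)).ConnectedComponent :=
  (G.induce (supp x)).connectedComponentMk ⟨u, Aset_subset_supp hu⟩

lemma scomp_ne {x : V → ℝ}
    (hnoedge : ∀ u ∈ Aset x 1, ∀ v ∈ Aset x (-1), ¬ G.Adj u v)
    {ε : ℝ} (hε : ε = 1 ∨ ε = -1) {u u' : V}
    (hε' : (-ε) = 1 ∨ (-ε) = -1)
    (hu : u ∈ Aset x ε) (hu' : u' ∈ Aset x (-ε)) :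
    scomp hε hu G ≠ scomp hε' hu' G := by
  intro h
  obtain ⟨w⟩ := SimpleGraph.ConnectedComponent.exact h
  have := (walk_descend (step_closed hnoedge hε) w hu).1
  exact Aset_disj this hu'

lemma scomp_eq_iff {x : V → ℝ}
    (hnoedge : ∀ u ∈ Aset x 1, ∀ v ∈ Aset x (-1), ¬ G.Adj u v)
    {ε : ℝ} (hε : ε = 1 ∨ ε = -1) {u u' : V}
    (hu : u ∈ Aset x ε) (hu' : u' ∈ Aset x ε) :
    scomp hε hu G = scomp hε hu' G ↔
      (G.induce (Aset x ε)).connectedComponentMk ⟨u, hu⟩ =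
      (G.induce (Aset x ε)).connectedComponentMk ⟨u', hu'⟩ := by
  constructor
  · intro h
    obtain ⟨w⟩ := SimpleGraph.ConnectedComponent.exact h
    obtain ⟨hb, hr⟩ := walk_descend (step_closed hnoedge hε) w hu
    exact SimpleGraph.ConnectedComponent.sound hr
  · intro h
    have hr := SimpleGraph.ConnectedComponent.exact h
    have := reach_mono (Aset_subset_supp (x := x) (ε := ε)) hr
    exact SimpleGraph.ConnectedComponent.sound this

end Stage3



section Stage4
variable {G : SimpleGraph V} {M : Matrix V V ℝ}

/-- SAH forbids four pairwise distinct components of the support -/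
lemma no_four {φ x : V → ℝ} (hM : CdVMatrix G M) (hSAH : SAH G M)
    (hφpos : ∀ v, 0 < φ v)
    (hA : ∀ y, φ ⬝ᵥ y = 0 → 0 ≤ y ⬝ᵥ (M *ᵥ y) ∧ (y ⬝ᵥ (M *ᵥ y) = 0 → M *ᵥ y = 0))
    (hx : M *ᵥ x = 0)
    (hnoedge : ∀ u ∈ Aset x 1, ∀ v ∈ Aset x (-1), ¬ G.Adj u v)
    {L₁ L₂ L₃ L₄ : (G.induce (supp x)).ConnectedComponent}
    (h12 : L₁ ≠ L₂) (h34 : L₃ ≠ L₄) (h13 : L₁ ≠ L₃) (h14 : L₁ ≠ L₄)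
    (h23 : L₂ ≠ L₃) (h24 : L₂ ≠ L₄) : False := by
  obtain ⟨w₁, hk1, hn1, hs1, _, _⟩ := supp_pair_w hM hφpos hA hx hnoedge h12
  obtain ⟨w₂, hk2, hn2, hs2, _, _⟩ := supp_pair_w hM hφpos hA hx hnoedge h34
  refine sah_contra hSAH w₁ w₂ hk1 hk2 ?_ hn1 hn2
  intro u v hu hv
  rcases (Set.mem_union _ _ _).mp (hs1 u hu) with h1 | h1 <;>
    rcases (Set.mem_union _ _ _).mp (hs2 v hv) with h2 | h2
  · exact not_adj_of_ne_comp h13 h1 h2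
  · exact not_adj_of_ne_comp h14 h1 h2
  · exact not_adj_of_ne_comp h23 h1 h2
  · exact not_adj_of_ne_comp h24 h1 h2

end Stage4



section MainAssembly

lemma semivalid_ker (G : SimpleGraph V) (hG : G.Connected) (M : Matrix V V ℝ)
    (hM : CdVMatrix G M) (hSAH : SAH G M) :
    Semivalid G (LinearMap.ker M.mulVecLin) := by
  classical
  obtain ⟨φ, hφpos, horth, hA⟩ := perron_package hG hM
  intro x hxL hx0
  have hxker : M *ᵥ x = 0 := by rwa [LinearMap.mem_ker, Matrix.mulVecLin_apply] at hxL
  have hpos_eq : posSupp x = Aset x 1 := by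
    ext v; show 0 < x v ↔ (0:ℝ) < 1 * x v; rw [one_mul]
  have hneg_eq : negSupp x = Aset x (-1) := by
    ext v
    show x v < 0 ↔ (0:ℝ) < -1 * x v
    constructor <;> intro h <;> linarith
  have hφx : φ ⬝ᵥ x = 0 := horth x hxker
  -- condition (i)
  have hposne : (posSupp x).Nonempty := by
    by_contra hne
    rw [Set.not_nonempty_iff_eq_empty] at hne
    have hle : ∀ v ∈ Finset.univ, φ v * x v ≤ 0 := by
      intro v _
      have hv : v ∉ posSupp x := by rw [hne]; exact Set.notMem_empty v
      have hxv : x v ≤ 0 := not_lt.mp hv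
      have := hφpos v
      nlinarith
    have hsum : ∑ v, φ v * x v = 0 := hφx
    have hz := (Finset.sum_eq_zero_iff_of_nonpos hle).mp hsum
    apply hx0
    funext v
    have h := hz v (Finset.mem_univ v)
    rcases mul_eq_zero.mp h with h' | h'
    · exact absurd h' (ne_of_gt (hφpos v))
    · exact h'
  have hnegne : (negSupp x).Nonempty := by
    by_contra hne
    rw [Set.not_nonempty_iff_eq_empty] at hne
    have hle : ∀ v ∈ Finset.univ, 0 ≤ φ v * x v := by
      intro v _
      have hv : v ∉ negSupp x := by rw [hne]; exact Set.notMem_empty v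
      have hxv : 0 ≤ x v := not_lt.mp hv
      have := hφpos v
      nlinarith
    have hsum : ∑ v, φ v * x v = 0 := hφx
    have hz := (Finset.sum_eq_zero_iff_of_nonneg hle).mp hsum
    apply hx0
    funext v
    have h := hz v (Finset.mem_univ v)
    rcases mul_eq_zero.mp h with h' | h'
    · exact absurd h' (ne_of_gt (hφpos v))
    · exact h'
  have hAne1 : (Aset x 1).Nonempty := by rw [← hpos_eq]; exact hposne
  have hAnem1 : (Aset x (-1)).Nonempty := by rw [← hneg_eq]; exact hnegne
  have key : ¬ (G.induce (posSupp x)).Connected →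
      ∀ u ∈ Aset x 1, ∀ v ∈ Aset x (-1), ¬ G.Adj u v := by
    intro hd
    rw [hpos_eq] at hd
    exact noedge_of_disc hM hφpos hA hxker (Or.inl rfl) hAne1 hd
  refine ⟨⟨hposne, hnegne⟩, ?_, ?_, ?_⟩
  -- condition (ii)
  · by_cases hconn : (G.induce (posSupp x)).Connected
    · exact Or.inl hconn
    right
    have hnoedge := key hconn
    have hdisc1 : ¬ (G.induce (Aset x 1)).Connected := by rw [← hpos_eq]; exact hconn
    obtain ⟨P₁, P₂, hP12⟩ := distinct_comps_of_not_connected hAne1 hdisc1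
    obtain ⟨r₁, hr₁⟩ := cSet_nonempty P₁
    obtain ⟨hr₁A, hr₁K⟩ := mem_cSet.mp hr₁
    obtain ⟨r₂, hr₂⟩ := cSet_nonempty P₂
    obtain ⟨hr₂A, hr₂K⟩ := mem_cSet.mp hr₂
    obtain ⟨n₀, hn₀A⟩ := id hAnem1
    have h1 : (1:ℝ) = 1 ∨ (1:ℝ) = -1 := Or.inl rfl
    have hm1 : (-1:ℝ) = 1 ∨ (-1:ℝ) = -1 := Or.inr rfl
    constructor
    · -- compCount = 2
      rw [hpos_eq]
      show Nat.card (G.induce (Aset x 1)).ConnectedComponent = 2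
      rw [Nat.card_eq_two_iff]
      refine ⟨P₁, P₂, hP12, ?_⟩
      rw [Set.eq_univ_iff_forall]
      intro K
      simp only [Set.mem_insert_iff, Set.mem_singleton_iff]
      by_contra hK
      push_neg at hK
      obtain ⟨hKP₁, hKP₂⟩ := hK
      obtain ⟨rK, hrK⟩ := cSet_nonempty K
      obtain ⟨hrKA, hrKK⟩ := mem_cSet.mp hrK
      refine no_four hM hSAH hφpos hA hxker hnoedge
        (L₁ := scomp h1 hrKA G) (L₂ := scomp h1 hr₁A G)
        (L₃ := scomp h1 hr₂A G) (L₄ := scomp hm1 hn₀A G)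
        ?_ ?_ ?_ ?_ ?_ ?_
      · intro h
        exact hKP₁ (by rw [← hrKK, ← hr₁K]; exact (scomp_eq_iff hnoedge h1 hrKA hr₁A).mp h)
      · exact scomp_ne hnoedge h1 hm1 hr₂A hn₀A
      · intro h
        exact hKP₂ (by rw [← hrKK, ← hr₂K]; exact (scomp_eq_iff hnoedge h1 hrKA hr₂A).mp h)
      · exact scomp_ne hnoedge h1 hm1 hrKA hn₀A
      · intro h
        exact hP12 (by rw [← hr₁K, ← hr₂K]; exact (scomp_eq_iff hnoedge h1 hr₁A hr₂A).mp h)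
      · exact scomp_ne hnoedge h1 hm1 hr₁A hn₀A
    · -- negative support connected
      rw [hneg_eq]
      refine (SimpleGraph.connected_iff _).mpr ⟨?_, Set.Nonempty.to_subtype hAnem1⟩
      intro a b
      by_contra hnr
      refine no_four hM hSAH hφpos hA hxker hnoedge
        (L₁ := scomp h1 hr₁A G) (L₂ := scomp h1 hr₂A G)
        (L₃ := scomp hm1 a.prop G) (L₄ := scomp hm1 b.prop G)
        ?_ ?_ ?_ ?_ ?_ ?_
      · intro h
        exact hP12 (by rw [← hr₁K, ← hr₂K]; exact (scomp_eq_iff hnoedge h1 hr₁A hr₂A).mp h)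
      · intro h
        have := (scomp_eq_iff hnoedge hm1 a.prop b.prop).mp h
        exact hnr (SimpleGraph.ConnectedComponent.exact this)
      · exact scomp_ne hnoedge h1 hm1 hr₁A a.prop
      · exact scomp_ne hnoedge h1 hm1 hr₁A b.prop
      · exact scomp_ne hnoedge h1 hm1 hr₂A a.prop
      · exact scomp_ne hnoedge h1 hm1 hr₂A b.prop
  -- condition (iii)
  · intro hmin
    constructor
    · by_contra hd
      have hd1 : ¬ (G.induce (Aset x 1)).Connected := by rw [← hpos_eq]; exact hd
      obtain ⟨P₁, P₂, hP12⟩ := distinct_comps_of_not_connected hAne1 hd1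
      obtain ⟨w, hkw, hwne, hwsupp⟩ := sign_pair_w hM hφpos hA hxker (Or.inl rfl) hP12
      have hwmem : w ∈ LinearMap.ker M.mulVecLin := by
        rw [LinearMap.mem_ker, Matrix.mulVecLin_apply]; exact hkw
      have hsub : supp w ⊆ supp x := by
        intro v hv
        exact Aset_subset_supp (hwsupp v hv)
      have heq := hmin w hwmem hwne hsub
      obtain ⟨n₀, hn₀⟩ := hnegne
      have hn₀supp : n₀ ∈ supp x := ne_of_lt hn₀
      rw [← heq] at hn₀supp
      have : n₀ ∈ Aset x 1 := hwsupp n₀ hn₀supp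
      have h1 : (0:ℝ) < 1 * x n₀ := this
      have h2 : x n₀ < 0 := hn₀
      linarith
    · by_contra hd
      have hd1 : ¬ (G.induce (Aset x (-1))).Connected := by rw [← hneg_eq]; exact hd
      obtain ⟨N₁, N₂, hN12⟩ := distinct_comps_of_not_connected hAnem1 hd1
      obtain ⟨w, hkw, hwne, hwsupp⟩ := sign_pair_w hM hφpos hA hxker (Or.inr rfl) hN12
      have hwmem : w ∈ LinearMap.ker M.mulVecLin := by
        rw [LinearMap.mem_ker, Matrix.mulVecLin_apply]; exact hkw
      have hsub : supp w ⊆ supp x := by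
        intro v hv
        exact Aset_subset_supp (hwsupp v hv)
      have heq := hmin w hwmem hwne hsub
      obtain ⟨p₀, hp₀⟩ := hposne
      have hp₀supp : p₀ ∈ supp x := ne_of_gt hp₀
      rw [← heq] at hp₀supp
      have : p₀ ∈ Aset x (-1) := hwsupp p₀ hp₀supp
      have h1 : (0:ℝ) < -1 * x p₀ := this
      have h2 : 0 < x p₀ := hp₀
      linarith
  -- condition (iv)
  · intro hdisc
    have hnoedge := key hdisc
    constructor
    · intro u hu v hv
      have hu1 : u ∈ Aset x 1 := by rw [← hpos_eq]; exact hu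
      have hv1 : v ∈ Aset x (-1) := by rw [← hneg_eq]; exact hv
      exact hnoedge u hu1 v hv1
    · rintro C ⟨K, rfl⟩
      have hCK : Subtype.val '' K.supp = cSet K := rfl
      rw [hCK]
      ext v
      constructor
      · rintro ⟨hvC, u, huC, hadj⟩
        refine ⟨?_, u, cSet_subset huC, hadj⟩
        intro hvsupp
        exact hvC (adj_mem_cSet huC hvsupp hadj)
      · rintro ⟨hvS, u₀, hu₀S, hadj⟩
        have hvK : v ∉ cSet K := fun h => hvS (cSet_subset h)
        set C₀ := (G.induce (supp x)).connectedComponentMk ⟨u₀, hu₀S⟩ with hC₀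
        by_cases hKC : C₀ = K
        · exact ⟨hvK, u₀, hKC ▸ mem_cSet_self hu₀S, hadj⟩
        refine ⟨hvK, ?_⟩
        by_contra hno
        push_neg at hno
        obtain ⟨w, hkw, hwne, hwsupp, ⟨aa, haane, hvalK⟩, ⟨bb, hbbne, hvalC₀⟩⟩ :=
          supp_pair_w hM hφpos hA hxker hnoedge (fun h => hKC h.symm)
        have h0 : ∑ u, M v u * w u = 0 := by
          rw [← mulVec_apply', hkw]
          rfl
        obtain ⟨ε₀, hε₀, hsub₀⟩ := suppComp_sign hnoedge C₀
        have hgeq : ∀ u, M v u * w u = bb * (M v u * cVec x C₀ u) := by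
          intro u
          by_cases hu1 : u ∈ cSet C₀
          · rw [hvalC₀ u hu1, cVec_of_mem hu1]
            ring
          by_cases hu2 : u ∈ cSet K
          · have hMvu : M v u = 0 := by
              have hne' : v ≠ u := by
                rintro rfl
                exact hvS (cSet_subset hu2)
              refine hM.nonedge_zero v u hne' fun hadj' => hno u hu2 hadj'.symm
            rw [hMvu, cVec_of_not_mem hu1]
            ring
          · have hwu : w u = 0 := by
              by_contra hc
              rcases (Set.mem_union _ _ _).mp (hwsupp u hc) with h | h
              · exact hu2 h
              · exact hu1 h
            rw [hwu, cVec_of_not_mem hu1]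
            ring
        have hsum0 : ∑ u, M v u * cVec x C₀ u = 0 := by
          have : ∑ u, M v u * w u = bb * ∑ u, M v u * cVec x C₀ u := by
            rw [Finset.mul_sum]
            exact Finset.sum_congr rfl fun u _ => hgeq u
          rw [this] at h0
          rcases mul_eq_zero.mp h0 with h | h
          · exact absurd h hbbne
          · exact h
        have hle : ∀ u ∈ Finset.univ, ε₀ * (M v u * cVec x C₀ u) ≤ 0 := by
          intro u _
          by_cases hu1 : u ∈ cSet C₀
          · rw [cVec_of_mem hu1]
            have hεxu : (0:ℝ) < ε₀ * x u := hsub₀ hu1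
            have hne' : v ≠ u := by
              rintro rfl
              exact hvS (cSet_subset hu1)
            have hMle : M v u ≤ 0 := offdiag_nonpos hM hne'
            nlinarith
          · rw [cVec_of_not_mem hu1]
            simp
        have hz : ∑ u, ε₀ * (M v u * cVec x C₀ u) = 0 := by
          rw [← Finset.mul_sum, hsum0, mul_zero]
        have heach := (Finset.sum_eq_zero_iff_of_nonpos hle).mp hz u₀ (Finset.mem_univ u₀)
        have hu₀C₀ : u₀ ∈ cSet C₀ := mem_cSet_self hu₀S
        rw [cVec_of_mem hu₀C₀] at heach
        have hMvu₀ : M v u₀ < 0 := hM.edge_neg v u₀ hadj.symm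
        have hεxu₀ : (0:ℝ) < ε₀ * x u₀ := hsub₀ hu₀C₀
        have hε₀2 : ε₀ * ε₀ = 1 := by rcases hε₀ with rfl | rfl <;> norm_num
        nlinarith

end MainAssembly


/-- for `G` connected and `M ∈ M(G)` satisfying the Strong Arnold
hypothesis, `ker(M)` is a semivalid representation of `G`; consequently `μ(G) ≤ η(G)`. -/
theorem stmt14 (G : SimpleGraph V) (hG : G.Connected) (M : Matrix V V ℝ)
    (hM : CdVMatrix G M) (hSAH : SAH G M) :
    Semivalid G (LinearMap.ker M.mulVecLin) ∧ muParam G ≤ etaParam G := by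
  have hsv := semivalid_ker G hG M hM hSAH
  refine ⟨hsv, ?_⟩
  have hbdd : BddAbove {n | ∃ L : Submodule ℝ (V → ℝ), Semivalid G L ∧ Module.finrank ℝ L = n} := by
    refine ⟨Module.finrank ℝ (V → ℝ), ?_⟩
    rintro m ⟨L, _, rfl⟩
    exact Submodule.finrank_le L
  refine csSup_le' ?_
  rintro n ⟨M', hM', hS', hrank⟩
  have hsv' := semivalid_ker G hG M' hM' hS'
  exact le_csSup hbdd ⟨_, hsv', hrank⟩
end

section
/- Let L be a semivalid representation of a connected graph G, β a broken cone of P(L), and α a cone in the boundary of β. Then supp_+(α) contains at least one of the two connected components of G[supp_+(β)], where this containment in fact is equality with a single component. -/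
open Matrix Set

variable {V : Type*} [Fintype V] [DecidableEq V]

section Helpers

open SimpleGraph in
private lemma walk_sep {G : SimpleGraph V} {S A : Set V}
    (hsep : ∀ u v, u ∈ A → v ∈ S → v ∉ A → ¬ G.Adj u v) :
    ∀ {a b : S}, (G.induce S).Walk a b → ∀ ha : ↑a ∈ A,
      ∃ hb : ↑b ∈ A, (G.induce A).Reachable ⟨a, ha⟩ ⟨b, hb⟩ := by
  intro a b w
  induction w with
  | nil => exact fun ha => ⟨ha, .refl _⟩
  | @cons u v _ h p ih =>
    intro ha
    have hv : ↑v ∈ A := by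
      by_contra hvA
      exact hsep u v ha v.2 hvA h
    obtain ⟨hb, hr⟩ := ih hv
    exact ⟨hb, .trans (SimpleGraph.Adj.reachable
      (show (G.induce A).Adj ⟨u, ha⟩ ⟨v, hv⟩ from h)) hr⟩

private lemma walk_mono {G : SimpleGraph V} {A S : Set V} (hAS : A ⊆ S) :
    ∀ {a b : A}, (G.induce A).Walk a b →
      (G.induce S).Reachable ⟨a, hAS a.2⟩ ⟨b, hAS b.2⟩ := by
  intro a b w
  induction w with
  | nil => exact .refl _
  | @cons u v _ h p ih =>
    exact .trans (SimpleGraph.Adj.reachable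
      (show (G.induce S).Adj ⟨u, hAS u.2⟩ ⟨v, hAS v.2⟩ from h)) ih

private lemma reach_mono_s15 {G : SimpleGraph V} {A S : Set V} (hAS : A ⊆ S) {a b : A}
    (h : (G.induce A).Reachable a b) :
    (G.induce S).Reachable ⟨a, hAS a.2⟩ ⟨b, hAS b.2⟩ := by
  obtain ⟨w⟩ := h; exact walk_mono hAS w

private lemma not_reach_sep {G : SimpleGraph V} {S A : Set V}
    (hsep : ∀ u v, u ∈ A → v ∈ S → v ∉ A → ¬ G.Adj u v) {a b : S}
    (ha : ↑a ∈ A) (hb : ↑b ∉ A) : ¬ (G.induce S).Reachable a b := by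
  intro hr
  obtain ⟨w⟩ := hr
  exact hb (walk_sep hsep w ha).1

private lemma comp_supp_sep {G : SimpleGraph V} {S : Set V}
    (K : (G.induce S).ConnectedComponent) :
    ∀ u v, u ∈ Subtype.val '' K.supp → v ∈ S → v ∉ Subtype.val '' K.supp →
      ¬ G.Adj u v := by
  rintro u v ⟨u', hu', rfl⟩ hvS hv hadj
  refine hv ⟨⟨v, hvS⟩, ?_, rfl⟩
  rw [SimpleGraph.ConnectedComponent.mem_supp_iff] at hu' ⊢
  rw [← hu']
  exact (SimpleGraph.ConnectedComponent.connectedComponentMk_eq_of_adj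
    (show (G.induce S).Adj ⟨v, hvS⟩ u' from hadj.symm))

private lemma comp_supp_conn {G : SimpleGraph V} {S : Set V}
    (K : (G.induce S).ConnectedComponent) :
    (G.induce (Subtype.val '' K.supp : Set V)).Connected := by
  obtain ⟨a, rfl⟩ := K.exists_rep
  rw [SimpleGraph.connected_iff]
  constructor
  · rintro ⟨u, u', hu', rfl⟩ ⟨v, v', hv', rfl⟩
    replace hu' : (G.induce S).connectedComponentMk u' = (G.induce S).connectedComponentMk a := hu'
    replace hv' : (G.induce S).connectedComponentMk v' = (G.induce S).connectedComponentMk a := hv'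
    have hr : (G.induce S).Reachable u' v' := by
      rw [← SimpleGraph.ConnectedComponent.eq, hu', hv']
    obtain ⟨w⟩ := hr
    have hu'm : ↑u' ∈ Subtype.val '' (SimpleGraph.connectedComponentMk _ a).supp :=
      ⟨u', hu', rfl⟩
    obtain ⟨hb, hr'⟩ := walk_sep (comp_supp_sep _) w hu'm
    exact hr'
  · exact ⟨⟨a, a, rfl, rfl⟩⟩

private lemma isCompOf_of {G : SimpleGraph V} {S A : Set V} (hAS : A ⊆ S)
    (hA : (G.induce A).Connected)
    (hsep : ∀ u v, u ∈ A → v ∈ S → v ∉ A → ¬ G.Adj u v) :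
    IsComponentOf G S A := by
  obtain ⟨⟨a, haA⟩⟩ := hA.nonempty
  refine ⟨(G.induce S).connectedComponentMk ⟨a, hAS haA⟩, ?_⟩
  ext v
  constructor
  · intro hvA
    have hr := reach_mono_s15 hAS (hA.preconnected ⟨a, haA⟩ ⟨v, hvA⟩)
    refine ⟨⟨v, hAS hvA⟩, ?_, rfl⟩
    rw [SimpleGraph.ConnectedComponent.mem_supp_iff]
    exact ((SimpleGraph.ConnectedComponent.eq).2 hr).symm
  · rintro ⟨v', hv', rfl⟩
    rw [SimpleGraph.ConnectedComponent.mem_supp_iff, eq_comm,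
      SimpleGraph.ConnectedComponent.eq] at hv'
    obtain ⟨w⟩ := hv'
    exact (walk_sep hsep w haA).1

private lemma exists_boundary {G : SimpleGraph V} {S A : Set V}
    (hS : (G.induce S).Connected) (hAS : A ⊆ S)
    (hA : A.Nonempty) (hSA : (S \ A).Nonempty) :
    ∃ u ∈ A, ∃ w ∈ S \ A, G.Adj u w := by
  by_contra h
  push_neg at h
  obtain ⟨a, ha⟩ := hA
  obtain ⟨b, hb⟩ := hSA
  exact not_reach_sep (fun u v hu hvS hvA hadj => h u hu v ⟨hvS, hvA⟩ hadj)
    (a := ⟨a, hAS ha⟩) (b := ⟨b, hb.1⟩) ha hb.2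
    (hS.preconnected ⟨a, hAS ha⟩ ⟨b, hb.1⟩)

private lemma three_le_card {α : Type*} [Finite α] {a b c : α}
    (hab : a ≠ b) (hac : a ≠ c) (hbc : b ≠ c) : 3 ≤ Nat.card α := by
  have hinj : Function.Injective (![a, b, c]) := by
    intro i j hij
    fin_cases i <;> fin_cases j <;>
      simp_all [hab, hac, hbc, hab.symm, hac.symm, hbc.symm]
  simpa using Nat.card_le_card_of_injective _ hinj

end Helpers

/-- if the cone `α = signCone L x` lies in the boundary of a broken cone
`β = signCone L y`, then `supp₊(α)` contains one of the connected components of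
`G[supp₊(β)]`, and in fact equals that single component. -/
theorem stmt15 (G : SimpleGraph V) (hG : G.Connected) (L : Submodule ℝ (V → ℝ))
    (hL : Semivalid G L) (x y : V → ℝ) (hx : x ∈ L) (hx0 : x ≠ 0)
    (hy : y ∈ L) (hy0 : y ≠ 0)
    (hbroken : ¬ (G.induce (posSupp y)).Connected)
    (hbd : signCone L x ⊆ closure (signCone L y) \ signCone L y) :
    ∃ K : (G.induce (posSupp y)).ConnectedComponent,
      Subtype.val '' K.supp ⊆ posSupp x ∧ posSupp x = Subtype.val '' K.supp := by
  classical
  have hxc : x ∈ closure (signCone L y) \ signCone L y := hbd ⟨hx, rfl, rfl⟩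
  have hps : posSupp x ⊆ posSupp y := by
    intro v hv
    by_contra hvy
    have hcl : closure (signCone L y) ⊆ {z : V → ℝ | z v ≤ 0} := by
      apply closure_minimal _ (isClosed_le (continuous_apply v) continuous_const)
      rintro z ⟨-, hzp, -⟩
      have hv' : v ∉ posSupp z := hzp ▸ hvy
      simpa [posSupp] using hv'
    have h1 : x v ≤ 0 := hcl hxc.1
    have hv2 : 0 < x v := hv
    linarith
  have hns : negSupp x ⊆ negSupp y := by
    intro v hv
    by_contra hvy
    have hcl : closure (signCone L y) ⊆ {z : V → ℝ | 0 ≤ z v} := by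
      apply closure_minimal _ (isClosed_le continuous_const (continuous_apply v))
      rintro z ⟨-, -, hzn⟩
      have hv' : v ∉ negSupp z := hzn ▸ hvy
      simpa [negSupp] using hv'
    have h1 : 0 ≤ x v := hcl hxc.1
    have hv2 : x v < 0 := hv
    linarith
  have hne : ¬ (posSupp x = posSupp y ∧ negSupp x = negSupp y) := by
    rintro ⟨h1, h2⟩; exact hxc.2 ⟨hx, h1, h2⟩
  obtain ⟨⟨hyp_ne, hyn_ne⟩, hii_y, -, hiv_y⟩ := hL y hy hy0
  obtain ⟨hcc_y, hyn_conn⟩ := hii_y.resolve_left hbroken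
  obtain ⟨hedge_y, hnbhd_y⟩ := hiv_y hbroken
  obtain ⟨⟨hxp_ne, hxn_ne⟩, hii_x, -, hiv_x⟩ := hL x hx hx0
  by_cases hPP : posSupp x = posSupp y
  · -- impossible case: posSupp x = posSupp y, negSupp x ⊊ negSupp y
    exfalso
    have hbx : ¬ (G.induce (posSupp x)).Connected := by rw [hPP]; exact hbroken
    obtain ⟨-, hxn_conn⟩ := hii_x.resolve_left hbx
    obtain ⟨hedge_x, hnbhd_x⟩ := hiv_x hbx
    have hneq : negSupp x ≠ negSupp y := fun h => hne ⟨hPP, h⟩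
    have hdiff : (negSupp y \ negSupp x).Nonempty := by
      obtain ⟨d, hd1, hd2⟩ := Set.exists_of_ssubset (hns.ssubset_of_ne hneq)
      exact ⟨d, hd1, hd2⟩
    obtain ⟨u, hu, w, hw, hadj⟩ := exists_boundary hyn_conn hns hxn_ne hdiff
    have hcomp_neg : IsComponentOf G (supp x) (negSupp x) := by
      apply isCompOf_of (fun v hv => ne_of_lt hv) hxn_conn
      intro u' v' hu' hv' hv'n hadj'
      have hv'p : v' ∈ posSupp x := by
        rcases lt_trichotomy (x v') 0 with h | h | h
        · exact absurd h hv'n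
        · exact absurd h hv'
        · exact h
      exact hedge_x v' hv'p u' hu' hadj'.symm
    obtain ⟨a1, ha1⟩ := hxp_ne
    set K1 : Set V :=
      Subtype.val '' ((G.induce (posSupp x)).connectedComponentMk ⟨a1, ha1⟩).supp
      with hK1def
    have hK1x : K1 ⊆ posSupp x := by rintro v ⟨v', -, rfl⟩; exact v'.2
    have hcomp_K1 : IsComponentOf G (supp x) K1 := by
      apply isCompOf_of (fun v hv => ne_of_gt (hK1x hv)) (comp_supp_conn _)
      intro u' v' hu' hv' hv'K hadj'
      rcases lt_trichotomy (x v') 0 with h | h | h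
      · exact hedge_x u' (hK1x hu') v' h hadj'
      · exact hv' h
      · exact comp_supp_sep _ u' v' hu' h hv'K hadj'
    have e1 := hnbhd_x (negSupp x) hcomp_neg
    have e2 := hnbhd_x K1 hcomp_K1
    have hwnb : w ∈ nbhd G (negSupp x) := ⟨hw.2, u, hu, hadj⟩
    rw [e1, ← e2] at hwnb
    obtain ⟨-, u', hu', hadj'⟩ := hwnb
    exact hedge_y u' (by rw [← hPP]; exact hK1x hu') w hw.1 hadj'
  · -- main case: posSupp x ⊊ posSupp y
    have hPne : (posSupp y \ posSupp x).Nonempty := by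
      obtain ⟨c, hc1, hc2⟩ := Set.exists_of_ssubset (hps.ssubset_of_ne hPP)
      exact ⟨c, hc1, hc2⟩
    set P : Set V := posSupp y \ posSupp x with hPdef
    set K : ℝ := 1 + ∑ v, |y v / x v| with hKdef
    have hKgt : ∀ v, y v / x v < K := by
      intro v
      calc y v / x v ≤ |y v / x v| := le_abs_self _
        _ ≤ ∑ v, |y v / x v| :=
            Finset.single_le_sum (f := fun v => |y v / x v|)
              (fun i _ => abs_nonneg _) (Finset.mem_univ v)
        _ < K := by rw [hKdef]; linarith
    set z : V → ℝ := y - K • x with hzdef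
    have hzv : ∀ v, z v = y v - K * x v := fun v => rfl
    have hzL : z ∈ L := L.sub_mem hy (L.smul_mem K hx)
    have hposz : posSupp z = P ∪ negSupp x := by
      ext v
      simp only [posSupp, negSupp, Set.mem_setOf_eq, Set.mem_union, hPdef,
        Set.mem_diff, hzv]
      rcases lt_trichotomy (x v) 0 with h | h | h
      · have hK' := (div_lt_iff_of_neg h).1 (hKgt v)
        constructor
        · intro _; exact Or.inr h
        · intro _; linarith
      · simp [h]
      · have hK' := (div_lt_iff₀ h).1 (hKgt v)
        constructor
        · intro hh; exfalso; linarith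
        · rintro (⟨-, hc⟩ | hc)
          · exact absurd h hc
          · exfalso; linarith
    have hnegz : negSupp z = posSupp x ∪ (negSupp y \ negSupp x) := by
      ext v
      simp only [posSupp, negSupp, Set.mem_setOf_eq, Set.mem_union,
        Set.mem_diff, hzv]
      rcases lt_trichotomy (x v) 0 with h | h | h
      · have hK' := (div_lt_iff_of_neg h).1 (hKgt v)
        constructor
        · intro hh; exfalso; linarith
        · rintro (hc | ⟨-, hc⟩)
          · exfalso; linarith
          · exact absurd h hc
      · simp [h]
      · have hK' := (div_lt_iff₀ h).1 (hKgt v)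
        constructor
        · intro _; exact Or.inl h
        · intro _; linarith
    obtain ⟨n0, hn0⟩ := hxn_ne
    have hn0z : n0 ∈ posSupp z := by rw [hposz]; exact Or.inr hn0
    have hz0 : z ≠ 0 := by
      intro h
      have hlt : (0 : ℝ) < z n0 := hn0z
      rw [h] at hlt
      simp at hlt
    obtain ⟨⟨hzp_ne, hzn_ne⟩, hii_z, -, -⟩ := hL z hzL hz0
    have hPnx_disj : ∀ v, v ∈ P → v ∈ negSupp x → False := by
      intro v h1 h2
      have h3 : 0 < y v := h1.1
      have h4 : y v < 0 := hns h2
      linarith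
    have hsep_zP : ∀ u v, u ∈ P → v ∈ posSupp z → v ∉ P → ¬ G.Adj u v := by
      intro u v hu hv hvP hadj
      have hvN : v ∈ negSupp x := by rw [hposz] at hv; exact hv.resolve_left hvP
      exact hedge_y u hu.1 v (hns hvN) hadj
    have hbroken_z : ¬ (G.induce (posSupp z)).Connected := by
      intro hc
      obtain ⟨c, hcP⟩ := hPne
      have hcz : c ∈ posSupp z := by rw [hposz]; exact Or.inl hcP
      exact not_reach_sep hsep_zP (a := ⟨c, hcz⟩) (b := ⟨n0, hn0z⟩) hcP
        (fun hn => hPnx_disj n0 hn hn0) (hc.preconnected _ _)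
    obtain ⟨hcc_z, hzn_conn⟩ := hii_z.resolve_left hbroken_z
    have hD : negSupp y \ negSupp x = ∅ := by
      by_contra hD
      obtain ⟨d, hd⟩ := Set.nonempty_iff_ne_empty.2 hD
      obtain ⟨a0, ha0⟩ := hxp_ne
      have hdz : d ∈ negSupp z := by rw [hnegz]; exact Or.inr hd
      have haz : a0 ∈ negSupp z := by rw [hnegz]; exact Or.inl ha0
      refine not_reach_sep (S := negSupp z) (A := posSupp x) ?_
        (a := ⟨a0, haz⟩) (b := ⟨d, hdz⟩) ha0 ?_ (hzn_conn.preconnected _ _)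
      · intro u v hu hv hvP hadj
        have hvD : v ∈ negSupp y \ negSupp x := by
          rw [hnegz] at hv; exact hv.resolve_left hvP
        exact hedge_y u (hps hu) v hvD.1 hadj
      · intro hdx
        have h3 : y d < 0 := hd.1
        have h4 : 0 < y d := hps hdx
        linarith
    have hnegzx : negSupp z = posSupp x := by rw [hnegz, hD, Set.union_empty]
    have hx_conn : (G.induce (posSupp x)).Connected := by
      rw [← hnegzx]; exact hzn_conn
    have hP_pre : ∀ p q : P, (G.induce P).Reachable p q := by
      rintro ⟨p, hp⟩ ⟨q, hq⟩
      have hpz : p ∈ posSupp z := by rw [hposz]; exact Or.inl hp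
      have hqz : q ∈ posSupp z := by rw [hposz]; exact Or.inl hq
      have hsame : (G.induce (posSupp z)).connectedComponentMk ⟨p, hpz⟩ =
          (G.induce (posSupp z)).connectedComponentMk ⟨q, hqz⟩ := by
        by_contra hne'
        have h1 : (G.induce (posSupp z)).connectedComponentMk ⟨p, hpz⟩ ≠
            (G.induce (posSupp z)).connectedComponentMk ⟨n0, hn0z⟩ := fun h =>
          not_reach_sep hsep_zP hp (fun hn => hPnx_disj n0 hn hn0)
            ((SimpleGraph.ConnectedComponent.eq).1 h)
        have h2 : (G.induce (posSupp z)).connectedComponentMk ⟨q, hqz⟩ ≠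
            (G.induce (posSupp z)).connectedComponentMk ⟨n0, hn0z⟩ := fun h =>
          not_reach_sep hsep_zP hq (fun hn => hPnx_disj n0 hn hn0)
            ((SimpleGraph.ConnectedComponent.eq).1 h)
        have h3 := three_le_card hne' h1 h2
        have h4 : compCount G (posSupp z) = 2 := hcc_z
        unfold compCount at h4
        omega
      obtain ⟨w⟩ := (SimpleGraph.ConnectedComponent.eq).1 hsame
      obtain ⟨hb, hr'⟩ := walk_sep hsep_zP w hp
      exact hr'
    obtain ⟨a, ha⟩ := hxp_ne
    have haY : a ∈ posSupp y := hps ha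
    have heq : posSupp x =
        Subtype.val '' ((G.induce (posSupp y)).connectedComponentMk ⟨a, haY⟩).supp := by
      apply Set.Subset.antisymm
      · intro b hb
        have hr := reach_mono_s15 hps (hx_conn.preconnected ⟨a, ha⟩ ⟨b, hb⟩)
        refine ⟨⟨b, hps hb⟩, ?_, rfl⟩
        rw [SimpleGraph.ConnectedComponent.mem_supp_iff]
        exact ((SimpleGraph.ConnectedComponent.eq).2 hr).symm
      · rintro _ ⟨⟨b, hbY⟩, hbK, rfl⟩
        by_contra hbx
        have hbP : b ∈ P := ⟨hbY, hbx⟩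
        have hnc : ¬ (G.induce (posSupp y)).Preconnected := by
          intro h
          have : Nonempty ↥(posSupp y) := ⟨⟨a, haY⟩⟩
          exact hbroken (SimpleGraph.Connected.mk h)
        have hex : ∃ c : ↥(posSupp y), ¬ (G.induce (posSupp y)).Reachable ⟨a, haY⟩ c := by
          by_contra hall
          push_neg at hall
          exact hnc fun u v => (hall u).symm.trans (hall v)
        obtain ⟨cS, hcr⟩ := hex
        have hcx : ↑cS ∉ posSupp x := fun hcx =>
          hcr (reach_mono_s15 hps (hx_conn.preconnected ⟨a, ha⟩ ⟨↑cS, hcx⟩))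
        have hcP : ↑cS ∈ P := ⟨cS.2, hcx⟩
        have hr := reach_mono_s15 (Set.diff_subset) (hP_pre ⟨b, hbP⟩ ⟨↑cS, hcP⟩)
        rw [SimpleGraph.ConnectedComponent.mem_supp_iff] at hbK
        exact hcr (((SimpleGraph.ConnectedComponent.eq).1 hbK.symm).trans hr)
    exact ⟨_, heq.symm.subset, heq⟩
end
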